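/- For every positive integer n there exists a bijection Φ on the set of set partitions of type C_n such that for every type C_n set partition 𝓑: op(Φ(𝓑)) = op(𝓑), cl(Φ(𝓑)) = cl(𝓑), the number of crossings among pairs of arcs of Φ(𝓑) that both have positive opener equals the number of nestings among pairs of arcs of 𝓑 that both have positive opener, and vice versa (i.e., the corresponding restricted nesting number of Φ(𝓑) equals the restricted crossing number of 𝓑). -/

import Mathlib

open scoped Classical
noncomputable section

/-! ### Set partitions of type A -/

/-- A set partition of `[n] = {1,…,n}`: pairwise disjoint nonempty blocks covering `[n]`. -/
structure SetPartitionA (n : ℕ) where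
  blocks : Finset (Finset ℕ)
  nonempty : ∀ B ∈ blocks, B.Nonempty
  disj : ∀ B ∈ blocks, ∀ B' ∈ blocks, B ≠ B' → Disjoint B B'
  cover : ∀ i : ℕ, (∃ B ∈ blocks, i ∈ B) ↔ i ∈ Finset.Icc 1 n

/-- Two arcs `(i,j)`, `(i',j')` cross if `i<i'<j<j'` (in either order of the two arcs). -/
def ACross (a b : ℕ × ℕ) : Prop :=
  (a.1 < b.1 ∧ b.1 < a.2 ∧ a.2 < b.2) ∨ (b.1 < a.1 ∧ a.1 < b.2 ∧ b.2 < a.2)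

/-- Two arcs `(i,j)`, `(i',j')` nest if `i<i'<j'<j` (in either order of the two arcs). -/
def ANest (a b : ℕ × ℕ) : Prop :=
  (a.1 < b.1 ∧ b.1 < b.2 ∧ b.2 < a.2) ∨ (b.1 < a.1 ∧ a.1 < a.2 ∧ a.2 < b.2)

namespace SetPartitionA

variable {n : ℕ}

/-- Openers: elements of `[n]` that are not the maximum of their block. -/
def openers (P : SetPartitionA n) : Finset ℕ :=
  (Finset.Icc 1 n).filter fun i => ∃ B ∈ P.blocks, i ∈ B ∧ ∃ j ∈ B, i < j

/-- Closers: elements of `[n]` that are not the minimum of their block. -/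
def closers (P : SetPartitionA n) : Finset ℕ :=
  (Finset.Icc 1 n).filter fun i => ∃ B ∈ P.blocks, i ∈ B ∧ ∃ j ∈ B, j < i

/-- `(i,j)` is an arc: `i < j` are in the same block with no block element in between. -/
def IsArc (P : SetPartitionA n) (i j : ℕ) : Prop :=
  i < j ∧ ∃ B ∈ P.blocks, i ∈ B ∧ j ∈ B ∧ ∀ k ∈ B, ¬(i < k ∧ k < j)

/-- The finite set of arcs of `P`. -/
def arcs (P : SetPartitionA n) : Finset (ℕ × ℕ) :=
  ((Finset.Icc 1 n) ×ˢ (Finset.Icc 1 n)).filter fun p => P.IsArc p.1 p.2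

/-- The number of crossings: pairs of arcs `(i,j)`, `(i',j')` with `i<i'<j<j'`. -/
def crossings (P : SetPartitionA n) : ℕ :=
  ((P.arcs ×ˢ P.arcs).filter fun q =>
    q.1.1 < q.2.1 ∧ q.2.1 < q.1.2 ∧ q.1.2 < q.2.2).card

/-- The number of nestings: pairs of arcs `(i,j)`, `(i',j')` with `i<i'<j'<j`. -/
def nestings (P : SetPartitionA n) : ℕ :=
  ((P.arcs ×ˢ P.arcs).filter fun q =>
    q.1.1 < q.2.1 ∧ q.2.1 < q.2.2 ∧ q.2.2 < q.1.2).card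

/-- The cardinality of a maximal crossing: largest set of mutually crossing arcs. -/
def maxCrossing (P : SetPartitionA n) : ℕ :=
  (P.arcs.powerset.filter fun S => ∀ a ∈ S, ∀ b ∈ S, a ≠ b → ACross a b).sup Finset.card

/-- The cardinality of a maximal nesting: largest set of mutually nesting arcs. -/
def maxNesting (P : SetPartitionA n) : ℕ :=
  (P.arcs.powerset.filter fun S => ∀ a ∈ S, ∀ b ∈ S, a ≠ b → ANest a b).sup Finset.card

end SetPartitionA

/-! ### Set partitions of classical types B/C/D on `[±n]` -/

/-- Position of `i ∈ [±n]` in the type `C` nesting order `1<⋯<n<-n<⋯<-1`. -/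
def nestOrd (n : ℕ) (i : ℤ) : ℤ := if 0 < i then i else 2 * n + 1 + i

/-- Position of `i ∈ [±n]` in the crossing order `1<⋯<n<-1<⋯<-n`. -/
def crossOrd (n : ℕ) (i : ℤ) : ℤ := if 0 < i then i else (n : ℤ) - i

/-- Position of `i ∈ [±n] ∪ {0}` in the type `B` nesting order `1<⋯<n<0<-n<⋯<-1`. -/
def nestOrdB (n : ℕ) (i : ℤ) : ℤ :=
  if 0 < i then i else if i = 0 then (n : ℤ) + 1 else 2 * n + 2 + i

/-- The negative `-B` of a block. -/
def negSet (B : Finset ℤ) : Finset ℤ := B.image fun x => -x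

/-- A set partition of type `B_n`/`C_n`: a set partition of `[±n]` with `B ∈ 𝓑 ↔ -B ∈ 𝓑`
and at most one block `B₀` with `B₀ = -B₀`. -/
structure SetPartitionC (n : ℕ) where
  blocks : Finset (Finset ℤ)
  nonempty : ∀ B ∈ blocks, B.Nonempty
  disj : ∀ B ∈ blocks, ∀ B' ∈ blocks, B ≠ B' → Disjoint B B'
  cover : ∀ i : ℤ, (∃ B ∈ blocks, i ∈ B) ↔ (i ≠ 0 ∧ |i| ≤ (n : ℤ))
  symm : ∀ B ∈ blocks, negSet B ∈ blocks
  zeroBlock : ∀ B ∈ blocks, ∀ B' ∈ blocks, negSet B = B → negSet B' = B' → B = B'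

/-- Endpoints of an arc, ordered by the crossing order. -/
def cpr (n : ℕ) (p : ℤ × ℤ) : ℤ × ℤ :=
  (min (crossOrd n p.1) (crossOrd n p.2), max (crossOrd n p.1) (crossOrd n p.2))

/-- `p` crosses `q` with `p` coming first in the crossing order. -/
def CrossRel (n : ℕ) (p q : ℤ × ℤ) : Prop :=
  (cpr n p).1 < (cpr n q).1 ∧ (cpr n q).1 < (cpr n p).2 ∧ (cpr n p).2 < (cpr n q).2

/-- The two arcs `p`, `q` cross in the crossing diagram. -/
def Crosses (n : ℕ) (p q : ℤ × ℤ) : Prop := CrossRel n p q ∨ CrossRel n q p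

/-- `p` nests over `q` in the nesting diagram (arcs written in nesting order). -/
def NestRel (n : ℕ) (p q : ℤ × ℤ) : Prop :=
  nestOrd n p.1 < nestOrd n q.1 ∧ nestOrd n q.2 < nestOrd n p.2

/-- The two arcs `p`, `q` nest in the nesting diagram. -/
def Nests (n : ℕ) (p q : ℤ × ℤ) : Prop := NestRel n p q ∨ NestRel n q p

/-- `p` nests over `q` in the type `B` nesting diagram. -/
def NestRelB (n : ℕ) (p q : ℤ × ℤ) : Prop :=
  nestOrdB n p.1 < nestOrdB n q.1 ∧ nestOrdB n q.2 < nestOrdB n p.2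

/-- The two arcs `p`, `q` nest in the type `B` nesting diagram. -/
def NestsB (n : ℕ) (p q : ℤ × ℤ) : Prop := NestRelB n p q ∨ NestRelB n q p

/-- Exceptional pairs for type `B` crossings: both arcs have positive opener and negative
closer, and at least one closer is smaller in absolute value than its opener. -/
def ExcCross (p q : ℤ × ℤ) : Prop :=
  0 < p.1 ∧ p.2 < 0 ∧ 0 < q.1 ∧ q.2 < 0 ∧ (|p.2| < |p.1| ∨ |q.2| < |q.1|)

/-- Exceptional pairs for type `B` nestings: both arcs have positive opener (or begin at `0`)
and negative closer (or end at `0`), and at least one closer is smaller in absolute value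
than its opener. -/
def ExcNest (p q : ℤ × ℤ) : Prop :=
  0 ≤ p.1 ∧ p.2 ≤ 0 ∧ 0 ≤ q.1 ∧ q.2 ≤ 0 ∧ (|p.2| < |p.1| ∨ |q.2| < |q.1|)

/-- A block augmented by `0` if it is the zero block. -/
def augB (B : Finset ℤ) : Finset ℤ := if negSet B = B then insert 0 B else B

/-- The arc `p` contains `n`. -/
def ContainsN (n : ℕ) (p : ℤ × ℤ) : Prop := p.1 = (n : ℤ) ∨ p.2 = (n : ℤ)

/-- The arc `p` contains `-n`. -/
def ContainsNegN (n : ℕ) (p : ℤ × ℤ) : Prop := p.1 = -(n : ℤ) ∨ p.2 = -(n : ℤ)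

namespace SetPartitionC

variable {n : ℕ}

/-- The ground set `[±n]` as a finset of integers. -/
def pmn (n : ℕ) : Finset ℤ := (Finset.Icc (-(n : ℤ)) (n : ℤ)).erase 0

/-- `(i,j)` is an arc: `i`, `j` are consecutive elements of a block in the nesting order. -/
def IsArc (P : SetPartitionC n) (i j : ℤ) : Prop :=
  nestOrd n i < nestOrd n j ∧ ∃ B ∈ P.blocks, i ∈ B ∧ j ∈ B ∧
    ∀ k ∈ B, ¬(nestOrd n i < nestOrd n k ∧ nestOrd n k < nestOrd n j)

/-- The finite set of arcs of `P` (written in nesting order). -/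
def arcs (P : SetPartitionC n) : Finset (ℤ × ℤ) :=
  (pmn n ×ˢ pmn n).filter fun p => P.IsArc p.1 p.2

/-- Openers: positive elements that are not maximal in their block w.r.t. the nesting order. -/
def openers (P : SetPartitionC n) : Finset ℤ :=
  (Finset.Icc 1 (n : ℤ)).filter fun i =>
    ∃ B ∈ P.blocks, i ∈ B ∧ ∃ j ∈ B, nestOrd n i < nestOrd n j

/-- Closers: positive elements that are not minimal in their block w.r.t. the nesting order. -/
def closers (P : SetPartitionC n) : Finset ℤ :=
  (Finset.Icc 1 (n : ℤ)).filter fun i =>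
    ∃ B ∈ P.blocks, i ∈ B ∧ ∃ j ∈ B, nestOrd n j < nestOrd n i

/-- The number of crossings of a type `C` set partition. -/
def crossings (P : SetPartitionC n) : ℕ :=
  ((P.arcs ×ˢ P.arcs).filter fun q => CrossRel n q.1 q.2).card

/-- The number of nestings of a type `C` set partition. -/
def nestings (P : SetPartitionC n) : ℕ :=
  ((P.arcs ×ˢ P.arcs).filter fun q => NestRel n q.1 q.2).card

/-- The number of crossings among pairs of arcs that both have positive opener. -/
def crossingsPos (P : SetPartitionC n) : ℕ :=
  (((P.arcs.filter fun p => 0 < p.1) ×ˢ (P.arcs.filter fun p => 0 < p.1)).filter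
    fun q => CrossRel n q.1 q.2).card

/-- The number of nestings among pairs of arcs that both have positive opener. -/
def nestingsPos (P : SetPartitionC n) : ℕ :=
  (((P.arcs.filter fun p => 0 < p.1) ×ˢ (P.arcs.filter fun p => 0 < p.1)).filter
    fun q => NestRel n q.1 q.2).card

/-- The cardinality of a maximal crossing. -/
def maxCrossing (P : SetPartitionC n) : ℕ :=
  (P.arcs.powerset.filter fun S => ∀ a ∈ S, ∀ b ∈ S, a ≠ b → Crosses n a b).sup Finset.card

/-- The cardinality of a maximal nesting. -/
def maxNesting (P : SetPartitionC n) : ℕ :=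
  (P.arcs.powerset.filter fun S => ∀ a ∈ S, ∀ b ∈ S, a ≠ b → Nests n a b).sup Finset.card

/-! ### Type B notions -/

/-- `(i,j)` is a type `B` nesting arc: consecutive elements of an augmented block in the
type `B` nesting order. -/
def IsArcB (P : SetPartitionC n) (i j : ℤ) : Prop :=
  nestOrdB n i < nestOrdB n j ∧ ∃ B ∈ P.blocks, i ∈ augB B ∧ j ∈ augB B ∧
    ∀ k ∈ augB B, ¬(nestOrdB n i < nestOrdB n k ∧ nestOrdB n k < nestOrdB n j)

/-- The finite set of type `B` nesting arcs of `P`. -/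
def arcsB (P : SetPartitionC n) : Finset (ℤ × ℤ) :=
  ((insert 0 (pmn n)) ×ˢ (insert 0 (pmn n))).filter fun p => P.IsArcB p.1 p.2

/-- The number of type `B` crossings. -/
def crossingsB (P : SetPartitionC n) : ℕ :=
  ((P.arcs ×ˢ P.arcs).filter fun q => CrossRel n q.1 q.2 ∧ ¬ExcCross q.1 q.2).card

/-- The number of type `B` nestings. -/
def nestingsB (P : SetPartitionC n) : ℕ :=
  ((P.arcsB ×ˢ P.arcsB).filter fun q => NestRelB n q.1 q.2 ∧ ¬ExcNest q.1 q.2).card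

/-- Openers in type `B`: positive elements not maximal in their block
w.r.t. the type `B` nesting order. -/
def openersB (P : SetPartitionC n) : Finset ℤ :=
  (Finset.Icc 1 (n : ℤ)).filter fun i =>
    ∃ B ∈ P.blocks, i ∈ B ∧ ∃ j ∈ B, nestOrdB n i < nestOrdB n j

/-- Closers in type `B`: positive elements not minimal in their block
w.r.t. the type `B` nesting order. -/
def closersB (P : SetPartitionC n) : Finset ℤ :=
  (Finset.Icc 1 (n : ℤ)).filter fun i =>
    ∃ B ∈ P.blocks, i ∈ B ∧ ∃ j ∈ B, nestOrdB n j < nestOrdB n i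

/-- The cardinality of a maximal type `B` crossing. -/
def maxCrossingB (P : SetPartitionC n) : ℕ :=
  (P.arcs.powerset.filter fun S =>
    ∀ a ∈ S, ∀ b ∈ S, a ≠ b → Crosses n a b ∧ ¬ExcCross a b).sup Finset.card

/-- The cardinality of a maximal type `B` nesting. -/
def maxNestingB (P : SetPartitionC n) : ℕ :=
  (P.arcsB.powerset.filter fun S =>
    ∀ a ∈ S, ∀ b ∈ S, a ≠ b → NestsB n a b ∧ ¬ExcNest a b).sup Finset.card

/-! ### Type D notions -/

/-- A type `C` set partition is of type `D` if the zero block, when present, is not a single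
pair `{i,-i}`. -/
def IsTypeD (P : SetPartitionC n) : Prop :=
  ∀ B ∈ P.blocks, negSet B = B → B.card ≠ 2

/-- The arcs starting in `{1,…,n-1}` and ending in the negative of an element of `{1,…,n-1}`. -/
def pnArcs (P : SetPartitionC n) : Finset (ℤ × ℤ) :=
  P.arcs.filter fun p => 0 < p.1 ∧ p.1 < (n : ℤ) ∧ -(n : ℤ) < p.2 ∧ p.2 < 0

/-- The index `l` of an arc `a = (i_l, -j_l)` in the list of `pnArcs` ordered by openers. -/
def dRank (P : SetPartitionC n) (a : ℤ × ℤ) : ℕ :=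
  (P.pnArcs.filter fun b => b.1 ≤ a.1).card

/-- The crossings allowed in a non-crossing set partition of type `D`. -/
def AllowedCrossD (P : SetPartitionC n) (p q : ℤ × ℤ) : Prop :=
  (ContainsN n p ∧ q ∈ P.pnArcs ∧ P.pnArcs.card < 2 * P.dRank q) ∨
  (ContainsN n q ∧ p ∈ P.pnArcs ∧ P.pnArcs.card < 2 * P.dRank p) ∨
  (ContainsNegN n p ∧ q ∈ P.pnArcs ∧ 2 * P.dRank q ≤ P.pnArcs.card) ∨
  (ContainsNegN n q ∧ p ∈ P.pnArcs ∧ 2 * P.dRank p ≤ P.pnArcs.card) ∨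
  (ContainsN n p ∧ ContainsNegN n q) ∨
  (ContainsN n q ∧ ContainsNegN n p)

/-- `P` is a non-crossing set partition of type `D_n`. -/
def NonCrossingD (P : SetPartitionC n) : Prop :=
  (∀ i : ℤ, 0 < i → P.IsArc i (-i) → i = n) ∧
  (∀ p ∈ P.arcs, ∀ q ∈ P.arcs, Crosses n p q → P.AllowedCrossD p q) ∧
  (∀ p ∈ P.arcs, ContainsN n p →
    ∀ q ∈ P.pnArcs, P.pnArcs.card < 2 * P.dRank q → Crosses n p q) ∧
  (∀ p ∈ P.arcs, ContainsNegN n p →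
    ∀ q ∈ P.pnArcs, 2 * P.dRank q ≤ P.pnArcs.card → Crosses n p q)

/-- The nestings (`p` over `q`) allowed in a non-nesting set partition of type `D`. -/
def AllowedNestD (P : SetPartitionC n) (p q : ℤ × ℤ) : Prop :=
  (0 < p.1 ∧ p.1 < q.1 ∧ q.1 < (n : ℤ) ∧ p.2 = -(n : ℤ) ∧ q.2 = (n : ℤ)) ∨
  (q.1 = (n : ℤ) ∧ q.2 = -(n : ℤ) ∧ 0 < p.1 ∧ p.1 < (n : ℤ) ∧ -(n : ℤ) < p.2 ∧ p.2 < 0 ∧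
    ∃ m : ℤ, 0 < m ∧ m < p.1 ∧ m < -p.2 ∧ P.IsArc m (n : ℤ))

/-- `P` is a non-nesting set partition of type `D_n`. -/
def NonNestingD (P : SetPartitionC n) : Prop :=
  (∀ i : ℤ, 0 < i → P.IsArc i (-i) → i = n) ∧
  (∀ p ∈ P.arcs, ∀ q ∈ P.arcs, NestRel n p q → P.AllowedNestD p q)

end SetPartitionC

/-! ### The staircase polyomino and chains in fillings -/

/-- The cells of the staircase polyomino `P_n`: `(c,r)` with `1 ≤ c ≤ n`, `c ≤ r ≤ 2n-1`. -/
def cellsP (n : ℕ) : Finset (ℕ × ℕ) :=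
  ((Finset.Icc 1 n) ×ˢ (Finset.Icc 1 (2 * n - 1))).filter fun p => p.1 ≤ p.2

/-- The length of the longest north-east chain among a set of (nonzero) cells:
columns strictly increase while rows strictly decrease. -/
def neLen (S : Finset (ℕ × ℕ)) : ℕ :=
  (S.powerset.filter fun T =>
    ∀ a ∈ T, ∀ b ∈ T, a ≠ b →
      (a.1 < b.1 ∧ b.2 < a.2) ∨ (b.1 < a.1 ∧ a.2 < b.2)).sup Finset.card

/-- The length of the longest south-east chain among a set of (nonzero) cells:
columns and rows strictly increase, and the surrounding rectangle lies in the polyomino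
(`a.1 ≤ b.2` for all cells `a`, `b` of the chain). -/
def seLen (S : Finset (ℕ × ℕ)) : ℕ :=
  (S.powerset.filter fun T =>
    (∀ a ∈ T, ∀ b ∈ T, a ≠ b →
      (a.1 < b.1 ∧ a.2 < b.2) ∨ (b.1 < a.1 ∧ b.2 < a.2)) ∧
    ∀ a ∈ T, ∀ b ∈ T, a.1 ≤ b.2).sup Finset.card

namespace SetPartitionC

variable {n : ℕ}

/-- The cells filled with `1` in the nesting filling of the staircase polyomino: rows are
labelled from top to bottom by `2,…,n,-n,…,-1`; the cell in column `i` and row labelled `j`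
is filled iff `(i,j)` is an arc with positive opener `i`. -/
def nestFill (P : SetPartitionC n) : Finset (ℕ × ℕ) :=
  (cellsP n).filter fun c => ∃ j : ℤ, P.IsArc (c.1 : ℤ) j ∧ nestOrd n j = (c.2 : ℤ) + 1

/-- The cells filled with `1` in the crossing filling of the staircase polyomino: rows are
labelled from top to bottom by `2,…,n,-1,…,-n`; the cell in column `i` and row labelled `j`
is filled iff `(i,j)` is an arc with positive opener `i`. -/
def crossFill (P : SetPartitionC n) : Finset (ℕ × ℕ) :=
  (cellsP n).filter fun c => ∃ j : ℤ, P.IsArc (c.1 : ℤ) j ∧ crossOrd n j = (c.2 : ℤ) + 1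

end SetPartitionC

/-! ### Triangulations of the symmetric 2n-gon and symmetric fans of Dyck paths -/

/-- `p` is a diagonal of the `2n`-gon with vertices labelled by `[±n]`, written with its two
(distinct) endpoints in crossing order. -/
def IsDiag (n : ℕ) (p : ℤ × ℤ) : Prop :=
  p.1 ≠ 0 ∧ p.2 ≠ 0 ∧ |p.1| ≤ (n : ℤ) ∧ |p.2| ≤ (n : ℤ) ∧ crossOrd n p.1 < crossOrd n p.2

/-- Normalize a pair so that its endpoints are in crossing order. -/
def normD (n : ℕ) (p : ℤ × ℤ) : ℤ × ℤ :=
  if crossOrd n p.1 < crossOrd n p.2 then p else (p.2, p.1)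

/-- `ω` contains `m` mutually crossing diagonals. -/
def HasMCross (n m : ℕ) (ω : Finset (ℤ × ℤ)) : Prop :=
  ∃ S ⊆ ω, S.card = m ∧ ∀ a ∈ S, ∀ b ∈ S, a ≠ b → Crosses n a b

/-- A type `C_n` `k`-triangulation: a symmetric set of diagonals with no `(k+1)`-crossing,
maximal with this property. -/
def IsTriangC (n k : ℕ) (ω : Finset (ℤ × ℤ)) : Prop :=
  (∀ p ∈ ω, IsDiag n p) ∧
  (∀ p ∈ ω, normD n (-p.1, -p.2) ∈ ω) ∧
  ¬HasMCross n (k + 1) ω ∧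
  ∀ d : ℤ × ℤ, IsDiag n d → d ∉ ω → HasMCross n (k + 1) (insert d ω)

/-- A Dyck path in the staircase polyomino starting at the top cell `(i,i)` of column `i`,
proceeding by unit south or west steps inside `P_n`, and ending on the main diagonal
`r = 2n - c`. -/
def IsDyckPath (n i : ℕ) (l : List (ℕ × ℕ)) : Prop :=
  l ≠ [] ∧ l.head? = some (i, i) ∧ (∀ c ∈ l, c ∈ cellsP n) ∧
  l.Chain' (fun a b => (b.1 = a.1 ∧ b.2 = a.2 + 1) ∨ (b.1 + 1 = a.1 ∧ b.2 = a.2)) ∧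
  ∀ c : ℕ × ℕ, l.getLast? = some c → c.2 = 2 * n - c.1

/-- A symmetric fan of `k` non-intersecting Dyck paths: the `i`-th path starts at cell
`(i,i)` and the paths are pairwise cell-disjoint. -/
def IsSymFan (n k : ℕ) (f : Fin k → List (ℕ × ℕ)) : Prop :=
  (∀ i : Fin k, IsDyckPath n ((i : ℕ) + 1) (f i)) ∧
  ∀ i j : Fin k, i ≠ j → ∀ c ∈ f i, c ∉ f j

namespace KZaux

lemma filter_lt_card_lt {S : Finset ℤ} {o : ℤ} (ho : o ∈ S) :
    (S.filter (· < o)).card < S.card := by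
  refine lt_of_le_of_lt (Finset.card_le_card ?_) (Finset.card_erase_lt_of_mem ho)
  intro x hx
  simp only [Finset.mem_filter] at hx
  exact Finset.mem_erase.2 ⟨ne_of_lt hx.2, hx.1⟩

lemma filter_split {S : Finset ℤ} {o : ℤ} (ho : o ∈ S) :
    (S.filter (· < o)).card + (S.filter (o < ·)).card = S.card - 1 := by
  have h1 : (S.filter (· < o)) ∪ (S.filter (o < ·)) = S.erase o := by
    ext x
    simp only [Finset.mem_union, Finset.mem_filter, Finset.mem_erase]
    constructor
    · rintro (⟨h, h'⟩ | ⟨h, h'⟩) <;> exact ⟨by omega, h⟩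
    · rintro ⟨h, h'⟩
      rcases lt_or_gt_of_ne h with h'' | h''
      · exact Or.inl ⟨h', h''⟩
      · exact Or.inr ⟨h', h''⟩
  have h2 : Disjoint (S.filter (· < o)) (S.filter (o < ·)) := by
    rw [Finset.disjoint_filter]
    intro x _ hx
    omega
  rw [← Finset.card_union_of_disjoint h2, h1, Finset.card_erase_of_mem ho]

lemma count_lt_strictMono {S : Finset ℤ} {a b : ℤ} (ha : a ∈ S) (hab : a < b) :
    (S.filter (· < a)).card < (S.filter (· < b)).card := by
  apply Finset.card_lt_card
  constructor
  · intro x hx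
    simp only [Finset.mem_filter] at hx ⊢
    exact ⟨hx.1, lt_trans hx.2 hab⟩
  · intro hsub
    have := hsub (Finset.mem_filter.2 ⟨ha, hab⟩)
    simp only [Finset.mem_filter] at this; omega

lemma count_eq_inj {S : Finset ℤ} {a b : ℤ} (ha : a ∈ S) (hb : b ∈ S)
    (h : (S.filter (· < a)).card = (S.filter (· < b)).card) : a = b := by
  rcases lt_trichotomy a b with h' | h' | h'
  · exact absurd h (ne_of_lt (count_lt_strictMono ha h'))
  · exact h'
  · exact absurd h.symm (ne_of_lt (count_lt_strictMono hb h'))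

lemma exists_nth : ∀ (m : ℕ) (S : Finset ℤ), m < S.card →
    ∃ o ∈ S, (S.filter (· < o)).card = m := by
  intro m
  induction m with
  | zero =>
    intro S hS
    have hne : S.Nonempty := Finset.card_pos.1 (by omega)
    refine ⟨S.min' hne, S.min'_mem hne, ?_⟩
    rw [Finset.card_eq_zero, Finset.filter_eq_empty_iff]
    intro x hx
    exact not_lt.2 (S.min'_le x hx)
  | succ m ih =>
    intro S hS
    have hne : S.Nonempty := Finset.card_pos.1 (by omega)
    set S' := S.erase (S.min' hne) with hS'
    have hcard : S'.card = S.card - 1 := Finset.card_erase_of_mem (S.min'_mem hne)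
    obtain ⟨o, hoS', ho⟩ := ih S' (by omega)
    have hoS : o ∈ S := Finset.mem_of_mem_erase hoS'
    refine ⟨o, hoS, ?_⟩
    have hmin : S.min' hne < o := by
      rcases lt_or_eq_of_le (S.min'_le o hoS) with h | h
      · exact h
      · exact absurd h.symm (Finset.ne_of_mem_erase hoS')
    have : S.filter (· < o) = insert (S.min' hne) (S'.filter (· < o)) := by
      ext x
      simp only [Finset.mem_insert, Finset.mem_filter, hS', Finset.mem_erase]
      constructor
      · rintro ⟨hx, hx'⟩
        by_cases hxm : x = S.min' hne
        · exact Or.inl hxm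
        · exact Or.inr ⟨⟨hxm, hx⟩, hx'⟩
      · rintro (rfl | ⟨⟨_, hx⟩, hx'⟩)
        · exact ⟨S.min'_mem hne, hmin⟩
        · exact ⟨hx, hx'⟩
    rw [this, Finset.card_insert_of_notMem, ho]
    simp [hS', Finset.mem_filter]

/-- the element of `S` with exactly `m` smaller elements in `S` -/
def nth (S : Finset ℤ) (m : ℕ) : ℤ :=
  if h : m < S.card then (exists_nth m S h).choose else 0

lemma nth_mem {S : Finset ℤ} {m : ℕ} (h : m < S.card) : nth S m ∈ S := by
  rw [nth, dif_pos h]; exact (exists_nth m S h).choose_spec.1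

lemma nth_count {S : Finset ℤ} {m : ℕ} (h : m < S.card) :
    (S.filter (· < nth S m)).card = m := by
  rw [nth, dif_pos h]; exact (exists_nth m S h).choose_spec.2

/-- order preserving transport -/
def sameMap (S T : Finset ℤ) (o : ℤ) : ℤ := nth T ((S.filter (· < o)).card)

/-- order reversing transport -/
def dualMap (S T : Finset ℤ) (o : ℤ) : ℤ := nth T (T.card - 1 - (S.filter (· < o)).card)

section
variable {S T : Finset ℤ} {o : ℤ} (hc : S.card = T.card) (ho : o ∈ S)
include hc ho

lemma sameMap_mem : sameMap S T o ∈ T :=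
  nth_mem (by rw [← hc]; exact filter_lt_card_lt ho)

lemma sameMap_count : (T.filter (· < sameMap S T o)).card = (S.filter (· < o)).card :=
  nth_count (by rw [← hc]; exact filter_lt_card_lt ho)

lemma sameMap_sameMap : sameMap T S (sameMap S T o) = o := by
  apply count_eq_inj (sameMap_mem (by rw [hc]) (sameMap_mem hc ho)) ho
  rw [sameMap_count hc.symm (sameMap_mem hc ho), sameMap_count hc ho]

lemma dualMap_mem : dualMap S T o ∈ T := by
  have h1 := filter_lt_card_lt ho
  exact nth_mem (by omega)

lemma dualMap_count_lt :
    (T.filter (· < dualMap S T o)).card = S.card - 1 - (S.filter (· < o)).card := by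
  have h1 := filter_lt_card_lt ho
  rw [dualMap, nth_count (by omega), hc]

lemma dualMap_count_gt :
    (T.filter (dualMap S T o < ·)).card = (S.filter (· < o)).card := by
  have h1 := filter_split (dualMap_mem hc ho)
  have h2 := dualMap_count_lt hc ho
  have h3 := filter_lt_card_lt ho
  omega

lemma dualMap_count_lt' :
    (T.filter (· < dualMap S T o)).card = (S.filter (o < ·)).card := by
  have := filter_split ho
  have h3 := filter_lt_card_lt ho
  rw [dualMap_count_lt hc ho]; omega

lemma dualMap_dualMap : dualMap T S (dualMap S T o) = o := by
  apply count_eq_inj (dualMap_mem (by rw [hc]) (dualMap_mem hc ho)) ho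
  have h1 := filter_lt_card_lt ho
  rw [dualMap_count_lt hc.symm (dualMap_mem hc ho), dualMap_count_lt hc ho]
  omega

end

lemma sameMap_strictMono {S T : Finset ℤ} {a b : ℤ} (hc : S.card = T.card)
    (ha : a ∈ S) (hb : b ∈ S) (hab : a < b) : sameMap S T a < sameMap S T b := by
  rcases lt_trichotomy (sameMap S T a) (sameMap S T b) with h | h | h
  · exact h
  · exact absurd (count_eq_inj ha hb (by
      rw [← sameMap_count hc ha, ← sameMap_count hc hb, h])) (ne_of_lt hab)
  · have := count_lt_strictMono (sameMap_mem hc hb) h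
    rw [sameMap_count hc ha, sameMap_count hc hb] at this
    exact absurd (count_lt_strictMono ha hab) (not_lt.2 (le_of_lt this))

lemma sameMap_lt_iff {S T : Finset ℤ} {a b : ℤ} (hc : S.card = T.card)
    (ha : a ∈ S) (hb : b ∈ S) : sameMap S T a < sameMap S T b ↔ a < b := by
  constructor
  · intro h
    rcases lt_trichotomy a b with h' | h' | h'
    · exact h'
    · subst h'; exact absurd h (lt_irrefl _)
    · exact absurd h (not_lt.2 (le_of_lt (sameMap_strictMono hc hb ha h')))
  · exact sameMap_strictMono hc ha hb

lemma sameMap_inj {S T : Finset ℤ} {a b : ℤ} (hc : S.card = T.card)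
    (ha : a ∈ S) (hb : b ∈ S) (h : sameMap S T a = sameMap S T b) : a = b := by
  rcases lt_trichotomy a b with h' | h' | h'
  · exact absurd h (ne_of_lt (sameMap_strictMono hc ha hb h'))
  · exact h'
  · exact absurd h.symm (ne_of_lt (sameMap_strictMono hc hb ha h'))

end KZaux
namespace KZaux

/-! ### The Kasraoui–Zeng style recursion on positive matchings -/

def srcs (A : Finset (ℤ × ℤ)) : Finset ℤ := A.image Prod.fst
def tgts (A : Finset (ℤ × ℤ)) : Finset ℤ := A.image Prod.snd

/-- openers of `O` available at closer `c` w.r.t. matching `A` -/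
def avail (O : Finset ℤ) (A : Finset (ℤ × ℤ)) (c : ℤ) : Finset ℤ :=
  O.filter fun o => o < c ∧ ∀ q ∈ A, q.1 = o → c ≤ q.2

def topC (A : Finset (ℤ × ℤ)) : ℤ := WithBot.unbotD 0 (tgts A).max
def topO (A : Finset (ℤ × ℤ)) : ℤ :=
  WithTop.untopD 0 (srcs (A.filter fun q => q.2 = topC A)).min

lemma topC_mem {A : Finset (ℤ × ℤ)} (h : A.Nonempty) : topC A ∈ tgts A := by
  have h' : (tgts A).Nonempty := h.image _
  obtain ⟨b, hb⟩ := Finset.max_of_nonempty h'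
  rw [topC, hb]
  exact Finset.mem_of_max hb

lemma topC_max {A : Finset (ℤ × ℤ)} {q : ℤ × ℤ} (hq : q ∈ A) : q.2 ≤ topC A := by
  have h' : (tgts A).Nonempty := ⟨q.2, Finset.mem_image_of_mem _ hq⟩
  obtain ⟨b, hb⟩ := Finset.max_of_nonempty h'
  rw [topC, hb]
  exact Finset.le_max_of_eq (Finset.mem_image_of_mem _ hq) hb

lemma topArc_mem {A : Finset (ℤ × ℤ)} (h : A.Nonempty) : (topO A, topC A) ∈ A := by
  have hc := topC_mem h
  rw [tgts, Finset.mem_image] at hc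
  obtain ⟨q, hq, hq2⟩ := hc
  have hne : (A.filter fun q => q.2 = topC A).Nonempty := ⟨q, Finset.mem_filter.2 ⟨hq, hq2⟩⟩
  have h' : (srcs (A.filter fun q => q.2 = topC A)).Nonempty := hne.image _
  obtain ⟨b, hb⟩ := Finset.min_of_nonempty h'
  have hbmem : b ∈ srcs (A.filter fun q => q.2 = topC A) := Finset.mem_of_min hb
  rw [srcs, Finset.mem_image] at hbmem
  obtain ⟨r, hr, hr1⟩ := hbmem
  rw [Finset.mem_filter] at hr
  have : topO A = b := by rw [topO, hb]; rfl
  rw [this, ← hr1, ← hr.2]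
  exact hr.1

def kz (O : Finset ℤ) (A : Finset (ℤ × ℤ)) : Finset (ℤ × ℤ) :=
  if h : A.Nonempty then
    insert (dualMap (avail O (A.erase (topO A, topC A)) (topC A))
                    (avail O (kz O (A.erase (topO A, topC A))) (topC A)) (topO A), topC A)
      (kz O (A.erase (topO A, topC A)))
  else ∅
termination_by A.card
decreasing_by exact Finset.card_erase_lt_of_mem (topArc_mem h)

lemma kz_empty (O : Finset ℤ) : kz O ∅ = ∅ := by
  rw [kz]; simp

lemma kz_of_nonempty {O : Finset ℤ} {A : Finset (ℤ × ℤ)} (h : A.Nonempty) :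
    kz O A = insert (dualMap (avail O (A.erase (topO A, topC A)) (topC A))
                    (avail O (kz O (A.erase (topO A, topC A))) (topC A)) (topO A), topC A)
      (kz O (A.erase (topO A, topC A))) := by
  rw [kz, dif_pos h]

/-- validity of a positive matching -/
def Good (O : Finset ℤ) (A : Finset (ℤ × ℤ)) : Prop :=
  (∀ p ∈ A, p.1 ∈ O ∧ p.1 < p.2) ∧
  (∀ p ∈ A, ∀ q ∈ A, p.1 = q.1 → p = q) ∧
  (∀ p ∈ A, ∀ q ∈ A, p.2 = q.2 → p = q)

lemma Good.subset {O : Finset ℤ} {A B : Finset (ℤ × ℤ)} (h : Good O A) (hBA : B ⊆ A) :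
    Good O B :=
  ⟨fun p hp => h.1 p (hBA hp), fun p hp q hq => h.2.1 p (hBA hp) q (hBA hq),
   fun p hp q hq => h.2.2 p (hBA hp) q (hBA hq)⟩

lemma srcs_card {O : Finset ℤ} {A : Finset (ℤ × ℤ)} (h : Good O A) :
    (srcs A).card = A.card :=
  Finset.card_image_of_injOn fun p hp q hq hpq => h.2.1 p hp q hq hpq

/-- the crossing-side statistic -/
def Fst (O : Finset ℤ) (A : Finset (ℤ × ℤ)) : ℕ :=
  ∑ p ∈ A, ((avail O A p.2).filter (p.1 < ·)).card

/-- the nesting-side statistic -/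
def Gst (O : Finset ℤ) (A : Finset (ℤ × ℤ)) : ℕ :=
  ∑ p ∈ A, ((avail O A p.2).filter (· < p.1)).card

lemma avail_erase {O : Finset ℤ} {A : Finset (ℤ × ℤ)} {p : ℤ × ℤ} (hp : p ∈ A) {c : ℤ}
    (hc : c ≤ p.2) : avail O (A.erase p) c = avail O A c := by
  unfold avail
  apply Finset.filter_congr
  intro o _
  constructor
  · rintro ⟨h1, h2⟩
    refine ⟨h1, fun q hq hq1 => ?_⟩
    by_cases hqp : q = p
    · subst hqp; exact hc
    · exact h2 q (Finset.mem_erase.2 ⟨hqp, hq⟩) hq1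
  · rintro ⟨h1, h2⟩
    exact ⟨h1, fun q hq hq1 => h2 q (Finset.mem_of_mem_erase hq) hq1⟩

lemma avail_eq_sdiff {O : Finset ℤ} {B : Finset (ℤ × ℤ)} {c : ℤ}
    (h : ∀ q ∈ B, q.2 < c) : avail O B c = (O.filter (· < c)) \ srcs B := by
  ext o
  simp only [avail, Finset.mem_filter, Finset.mem_sdiff, srcs, Finset.mem_image]
  constructor
  · rintro ⟨h1, h2, h3⟩
    refine ⟨⟨h1, h2⟩, ?_⟩
    rintro ⟨q, hq, rfl⟩
    exact absurd (h3 q hq rfl) (not_le.2 (h q hq))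
  · rintro ⟨⟨h1, h2⟩, h3⟩
    refine ⟨h1, h2, fun q hq hq1 => absurd ⟨q, hq, hq1⟩ h3⟩

theorem kz_main (O : Finset ℤ) (A : Finset (ℤ × ℤ)) (hA : Good O A) :
    Good O (kz O A) ∧ tgts (kz O A) = tgts A ∧ (kz O A).card = A.card ∧
      kz O (kz O A) = A ∧ Fst O (kz O A) = Gst O A ∧ Gst O (kz O A) = Fst O A := by
  induction A using Finset.strongInduction with
  | _ A ih =>
  by_cases hne : A.Nonempty
  case neg =>
    rw [Finset.not_nonempty_iff_eq_empty] at hne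
    subst hne
    simp [kz_empty, Good, tgts, Fst, Gst]
  case pos =>
  set c := topC A with hc
  set o := topO A with ho
  have hpA : (o, c) ∈ A := topArc_mem hne
  set A₀ := A.erase (o, c) with hA₀
  have hA₀sub : A₀ ⊆ A := Finset.erase_subset _ _
  have hA₀good : Good O A₀ := hA.subset hA₀sub
  obtain ⟨ihGood, ihTgts, ihCard, ihInv, ihF, ihG⟩ := ih A₀ (Finset.erase_ssubset hpA) hA₀good
  have hlt : ∀ q ∈ A₀, q.2 < c := by
    intro q hq
    have h1 : q.2 ≤ c := topC_max (hA₀sub hq)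
    rcases lt_or_eq_of_le h1 with h | h
    · exact h
    · exfalso
      have := hA.2.2 q (hA₀sub hq) (o, c) hpA h
      rw [this] at hq
      exact (Finset.notMem_erase _ _) hq
  have hlt' : ∀ q ∈ kz O A₀, q.2 < c := by
    intro q hq
    have : q.2 ∈ tgts A₀ := by rw [← ihTgts]; exact Finset.mem_image_of_mem _ hq
    rw [tgts, Finset.mem_image] at this
    obtain ⟨r, hr, hr2⟩ := this
    rw [← hr2]; exact hlt r hr
  set S := avail O A₀ c with hS
  set S' := avail O (kz O A₀) c with hS'
  have hSd : S = (O.filter (· < c)) \ srcs A₀ := avail_eq_sdiff hlt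
  have hS'd : S' = (O.filter (· < c)) \ srcs (kz O A₀) := avail_eq_sdiff hlt'
  have hsub1 : srcs A₀ ⊆ O.filter (· < c) := by
    intro x hx
    rw [srcs, Finset.mem_image] at hx
    obtain ⟨q, hq, hq1⟩ := hx
    obtain ⟨h1, h2⟩ := hA.1 q (hA₀sub hq)
    rw [← hq1]
    exact Finset.mem_filter.2 ⟨h1, lt_trans h2 (hlt q hq)⟩
  have hsub1' : srcs (kz O A₀) ⊆ O.filter (· < c) := by
    intro x hx
    rw [srcs, Finset.mem_image] at hx
    obtain ⟨q, hq, hq1⟩ := hx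
    obtain ⟨h1, h2⟩ := ihGood.1 q hq
    rw [← hq1]
    exact Finset.mem_filter.2 ⟨h1, lt_trans h2 (hlt' q hq)⟩
  have hScard : S.card = S'.card := by
    rw [hSd, hS'd, Finset.card_sdiff_of_subset hsub1, Finset.card_sdiff_of_subset hsub1',
      srcs_card hA₀good, srcs_card ihGood, ihCard]
  have hoS : o ∈ S := by
    rw [hSd]
    refine Finset.mem_sdiff.2 ⟨Finset.mem_filter.2 ⟨(hA.1 _ hpA).1, (hA.1 _ hpA).2⟩, ?_⟩
    rw [srcs, Finset.mem_image]
    rintro ⟨q, hq, hq1⟩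
    have := hA.2.1 q (hA₀sub hq) (o, c) hpA hq1
    rw [this] at hq
    exact (Finset.notMem_erase _ _) hq
  set o' := dualMap S S' o with ho'
  have ho'S' : o' ∈ S' := dualMap_mem hScard hoS
  have ho'O : o' ∈ O := by
    rw [hS'd] at ho'S'
    exact (Finset.mem_filter.1 (Finset.mem_sdiff.1 ho'S').1).1
  have ho'c : o' < c := by
    have := (Finset.mem_filter.1 (Finset.mem_sdiff.1 (hS'd ▸ ho'S')).1).2
    exact this
  have ho'ns : o' ∉ srcs (kz O A₀) := (Finset.mem_sdiff.1 (hS'd ▸ ho'S')).2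
  have hkzA : kz O A = insert (o', c) (kz O A₀) := kz_of_nonempty hne
  have hnotmem : (o', c) ∉ kz O A₀ := by
    intro hmem
    exact absurd rfl (ne_of_lt (hlt' _ hmem))
  have hAins : A = insert (o, c) A₀ := (Finset.insert_erase hpA).symm
  have hnotmemA : (o, c) ∉ A₀ := Finset.notMem_erase _ _
  -- Goodness of kz O A
  have hGood : Good O (kz O A) := by
    rw [hkzA]
    refine ⟨?_, ?_, ?_⟩
    · intro p hp
      rcases Finset.mem_insert.1 hp with rfl | hp
      · exact ⟨ho'O, ho'c⟩
      · exact ihGood.1 p hp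
    · intro p hp q hq hpq
      rcases Finset.mem_insert.1 hp with rfl | hp <;>
        rcases Finset.mem_insert.1 hq with rfl | hq
      · rfl
      · exact absurd (Finset.mem_image_of_mem Prod.fst hq : q.1 ∈ srcs (kz O A₀))
          (by rw [← hpq]; exact ho'ns)
      · exact absurd (Finset.mem_image_of_mem Prod.fst hp : p.1 ∈ srcs (kz O A₀))
          (by rw [hpq]; exact ho'ns)
      · exact ihGood.2.1 p hp q hq hpq
    · intro p hp q hq hpq
      rcases Finset.mem_insert.1 hp with rfl | hp <;>
        rcases Finset.mem_insert.1 hq with rfl | hq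
      · rfl
      · exact absurd hpq.symm (ne_of_lt (hlt' q hq))
      · exact absurd hpq (ne_of_lt (hlt' p hp))
      · exact ihGood.2.2 p hp q hq hpq
  have hTgts : tgts (kz O A) = tgts A := by
    have h := ihTgts
    simp only [tgts] at h
    rw [hkzA]
    conv_rhs => rw [hAins]
    simp only [tgts, Finset.image_insert]
    rw [h]
  have hCard : (kz O A).card = A.card := by
    rw [hkzA, hAins, Finset.card_insert_of_notMem hnotmem,
      Finset.card_insert_of_notMem hnotmemA, ihCard]
  -- the top arc of kz O A
  have htopC : topC (kz O A) = c := by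
    rw [topC, hTgts]; rfl
  have hfilter : (kz O A).filter (fun q => q.2 = topC (kz O A)) = {(o', c)} := by
    rw [htopC]
    ext q
    simp only [Finset.mem_filter, Finset.mem_singleton]
    constructor
    · rintro ⟨hq, hq2⟩
      rw [hkzA] at hq
      rcases Finset.mem_insert.1 hq with rfl | hq
      · rfl
      · exact absurd hq2 (ne_of_lt (hlt' q hq))
    · rintro rfl
      exact ⟨by rw [hkzA]; exact Finset.mem_insert_self _ _, rfl⟩
  have htopO : topO (kz O A) = o' := by
    rw [topO, hfilter]
    simp [srcs]
  have herasekz : (kz O A).erase (topO (kz O A), topC (kz O A)) = kz O A₀ := by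
    rw [htopO, htopC, hkzA, Finset.erase_insert hnotmem]
  -- involution
  have hInv : kz O (kz O A) = A := by
    have hkzne : (kz O A).Nonempty := ⟨(o', c), by rw [hkzA]; exact Finset.mem_insert_self _ _⟩
    rw [kz_of_nonempty hkzne, herasekz, htopO, htopC, ihInv, ← hS, ← hS']
    rw [ho', dualMap_dualMap hScard hoS, ← hAins]
  -- statistics
  have havail_c : avail O A c = S := by
    rw [hS, hA₀]
    exact (avail_erase hpA (le_refl _)).symm
  have havail_c' : avail O (kz O A) c = S' := by
    rw [hS', hkzA]
    have := avail_erase (O := O) (Finset.mem_insert_self (o', c) (kz O A₀)) (le_refl c)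
    rw [Finset.erase_insert hnotmem] at this
    exact this.symm
  have havail_q : ∀ q ∈ A₀, avail O A q.2 = avail O A₀ q.2 := by
    intro q hq
    rw [hA₀]
    exact (avail_erase hpA (le_of_lt (hlt q hq))).symm
  have havail_q' : ∀ q ∈ kz O A₀, avail O (kz O A) q.2 = avail O (kz O A₀) q.2 := by
    intro q hq
    rw [hkzA]
    have := avail_erase (O := O) (Finset.mem_insert_self (o', c) (kz O A₀)) (le_of_lt (hlt' q hq))
    rw [Finset.erase_insert hnotmem] at this
    exact this.symm
  have hFstA : Fst O A = ((avail O A₀ c).filter (o < ·)).card + Fst O A₀ := by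
    rw [Fst, hAins, Finset.sum_insert hnotmemA]
    congr 1
    · rw [← hAins, havail_c, hS]
    · apply Finset.sum_congr rfl
      intro q hq
      rw [← hAins, havail_q q hq]
  have hGstA : Gst O A = ((avail O A₀ c).filter (· < o)).card + Gst O A₀ := by
    rw [Gst, hAins, Finset.sum_insert hnotmemA]
    congr 1
    · rw [← hAins, havail_c, hS]
    · apply Finset.sum_congr rfl
      intro q hq
      rw [← hAins, havail_q q hq]
  have hFstkz : Fst O (kz O A) = (S'.filter (o' < ·)).card + Fst O (kz O A₀) := by
    rw [Fst, hkzA, Finset.sum_insert hnotmem]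
    congr 1
    · rw [← hkzA, havail_c']
    · apply Finset.sum_congr rfl
      intro q hq
      rw [← hkzA, havail_q' q hq]
  have hGstkz : Gst O (kz O A) = (S'.filter (· < o')).card + Gst O (kz O A₀) := by
    rw [Gst, hkzA, Finset.sum_insert hnotmem]
    congr 1
    · rw [← hkzA, havail_c']
    · apply Finset.sum_congr rfl
      intro q hq
      rw [← hkzA, havail_q' q hq]
  have hF : Fst O (kz O A) = Gst O A := by
    rw [hFstkz, hGstA, ihF, ho', dualMap_count_gt hScard hoS, hS]
  have hG : Gst O (kz O A) = Fst O A := by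
    rw [hGstkz, hFstA, ihG, ho', dualMap_count_lt' hScard hoS, hS]
  exact ⟨hGood, hTgts, hCard, hInv, hF, hG⟩

end KZaux
namespace KZaux

variable {n : ℕ}

/-! ### basic order facts -/

lemma mem_pmn {i : ℤ} : i ∈ SetPartitionC.pmn n ↔ i ≠ 0 ∧ |i| ≤ (n : ℤ) := by
  simp [SetPartitionC.pmn, Finset.mem_erase, Finset.mem_Icc, abs_le]

lemma nestOrd_of_pos {i : ℤ} (h : 0 < i) : nestOrd n i = i := if_pos h

lemma nestOrd_of_neg {i : ℤ} (h : ¬ 0 < i) : nestOrd n i = 2 * n + 1 + i := if_neg h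

lemma nestOrd_bounds {i : ℤ} (h : i ∈ SetPartitionC.pmn n) :
    1 ≤ nestOrd n i ∧ nestOrd n i ≤ 2 * n ∧
      (0 < i → nestOrd n i ≤ n) ∧ (i < 0 → (n : ℤ) + 1 ≤ nestOrd n i) := by
  rw [mem_pmn] at h
  obtain ⟨h1, h2⟩ := h
  rw [abs_le] at h2
  unfold nestOrd
  split <;> omega

lemma nestOrd_inj {i j : ℤ} (hi : i ∈ SetPartitionC.pmn n) (hj : j ∈ SetPartitionC.pmn n)
    (h : nestOrd n i = nestOrd n j) : i = j := by
  have hi' := mem_pmn.1 hi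
  have hj' := mem_pmn.1 hj
  rw [abs_le] at hi' hj'
  unfold nestOrd at h
  split at h <;> split at h <;> omega

lemma nestOrd_neg {i : ℤ} (hi : i ∈ SetPartitionC.pmn n) :
    nestOrd n (-i) = 2 * n + 1 - nestOrd n i := by
  have hi' := mem_pmn.1 hi
  rw [abs_le] at hi'
  unfold nestOrd
  split <;> split <;> omega

lemma neg_mem_pmn {i : ℤ} (hi : i ∈ SetPartitionC.pmn n) : -i ∈ SetPartitionC.pmn n := by
  rw [mem_pmn] at hi ⊢
  rw [abs_neg]
  exact ⟨neg_ne_zero.2 hi.1, hi.2⟩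

lemma mem_negSet {B : Finset ℤ} {x : ℤ} : x ∈ negSet B ↔ -x ∈ B := by
  simp only [negSet, Finset.mem_image]
  constructor
  · rintro ⟨y, hy, rfl⟩; simpa using hy
  · intro h; exact ⟨-x, h, by ring⟩

/-! ### valid arc sets -/

def ValidArcs (n : ℕ) (A : Finset (ℤ × ℤ)) : Prop :=
  (∀ p ∈ A, 0 < p.1 ∧ p.1 ≤ (n : ℤ) ∧ p.2 ≠ 0 ∧ |p.2| ≤ (n : ℤ) ∧
    nestOrd n p.1 < nestOrd n p.2) ∧
  (∀ p ∈ A, ∀ q ∈ A, p.1 = q.1 → p = q) ∧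
  (∀ p ∈ A, ∀ q ∈ A, p.2 = q.2 → p = q) ∧
  (∀ p ∈ A, p.2 < 0 → (-p.2, -p.1) ∈ A) ∧
  (∀ p ∈ A, ∀ q ∈ A, p.2 = -p.1 → q.2 = -q.1 → p = q)

/-- the full (symmetrized) arc relation -/
def arel (A : Finset (ℤ × ℤ)) (x y : ℤ) : Prop := (x, y) ∈ A ∨ (-y, -x) ∈ A

section
variable {A : Finset (ℤ × ℤ)} (hV : ValidArcs n A)
include hV

lemma cond1' {p : ℤ × ℤ} (hp : p ∈ A) :
    0 < p.1 ∧ p.1 ≤ (n : ℤ) ∧ p.2 ≠ 0 ∧ -(n : ℤ) ≤ p.2 ∧ p.2 ≤ (n : ℤ) ∧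
      nestOrd n p.1 < nestOrd n p.2 := by
  obtain ⟨h1, h2, h3, h4, h5⟩ := hV.1 p hp
  rw [abs_le] at h4
  exact ⟨h1, h2, h3, h4.1, h4.2, h5⟩

lemma arel_mem_fst {x y : ℤ} (h : arel A x y) : x ∈ SetPartitionC.pmn n := by
  rw [mem_pmn, abs_le]
  rcases h with h | h
  · have := cond1' hV h
    simp only at this
    refine ⟨by omega, by omega, by omega⟩
  · have := cond1' hV h
    simp only at this
    refine ⟨by omega, by omega, by omega⟩

lemma arel_mem_snd {x y : ℤ} (h : arel A x y) : y ∈ SetPartitionC.pmn n := by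
  rw [mem_pmn, abs_le]
  rcases h with h | h
  · have := cond1' hV h
    simp only at this
    refine ⟨by omega, by omega, by omega⟩
  · have := cond1' hV h
    simp only at this
    refine ⟨by omega, by omega, by omega⟩

lemma arel_lt {x y : ℤ} (h : arel A x y) : nestOrd n x < nestOrd n y := by
  have hx := arel_mem_fst hV h
  have hy := arel_mem_snd hV h
  rcases h with h | h
  · exact (cond1' hV h).2.2.2.2.2
  · have := (cond1' hV h).2.2.2.2.2
    simp only at this
    rw [nestOrd_neg hy, nestOrd_neg hx] at this
    omega

lemma arel_functional {x y z : ℤ} (h1 : arel A x y) (h2 : arel A x z) : y = z := by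
  rcases h1 with k1 | k1 <;> rcases h2 with k2 | k2
  · exact congrArg Prod.snd (hV.2.1 _ k1 _ k2 rfl)
  · have h1' : 0 < x := (hV.1 _ k1).1
    have k2' := hV.2.2.2.1 _ k2 (show (-z, -x).2 < 0 from by show -x < 0; omega)
    simp only [neg_neg] at k2'
    exact congrArg Prod.snd (hV.2.1 _ k1 _ k2' rfl)
  · have h1' : 0 < x := (hV.1 _ k2).1
    have k1' := hV.2.2.2.1 _ k1 (show (-y, -x).2 < 0 from by show -x < 0; omega)
    simp only [neg_neg] at k1'
    exact (congrArg Prod.snd (hV.2.1 _ k2 _ k1' rfl)).symm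
  · have h5 : -y = -z := congrArg Prod.fst (hV.2.2.1 _ k1 _ k2 rfl)
    omega

lemma arel_inj {x y z : ℤ} (h1 : arel A y x) (h2 : arel A z x) : y = z := by
  have key : ∀ w, arel A w x → ((w, x) ∈ A ∨ ((-x, -w) ∈ A ∧ x < 0)) := by
    intro w hw
    rcases hw with hw | hw
    · exact Or.inl hw
    · right
      refine ⟨hw, ?_⟩
      have := (hV.1 _ hw).1
      simp only at this
      omega
  rcases key y h1 with k1 | ⟨k1, hx0⟩ <;> rcases key z h2 with k2 | ⟨k2, hx0'⟩
  · have := hV.2.2.1 _ k1 _ k2 rfl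
    exact congrArg Prod.fst this
  · have k1' := hV.2.2.2.1 _ k1 hx0'
    simp only [neg_neg] at k1'
    have := hV.2.1 _ k1' _ k2 rfl
    have := congrArg Prod.snd this
    simp only at this
    omega
  · have k2' := hV.2.2.2.1 _ k2 hx0
    simp only [neg_neg] at k2'
    have := hV.2.1 _ k2' _ k1 rfl
    have := congrArg Prod.snd this
    simp only at this
    omega
  · have := hV.2.1 _ k1 _ k2 rfl
    have := congrArg Prod.snd this
    simp only at this
    omega

end

lemma arel_neg {A : Finset (ℤ × ℤ)} {x y : ℤ} : arel A x y ↔ arel A (-y) (-x) := by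
  unfold arel
  rw [neg_neg, neg_neg]
  exact or_comm

end KZaux
namespace KZaux
open Relation

variable {n : ℕ}

section RTG
variable {A : Finset (ℤ × ℤ)} (hV : ValidArcs n A)

local notation "RT" => Relation.ReflTransGen (arel A)

lemma rt_le {x y : ℤ} (hV : ValidArcs n A) (h : RT x y) : nestOrd n x ≤ nestOrd n y := by
  induction h with
  | refl => exact le_refl _
  | tail h1 h2 ih => exact le_trans ih (le_of_lt (arel_lt hV h2))

include hV in
lemma rt_mem_snd {x y : ℤ} (h : RT x y) (hxy : x ≠ y) : y ∈ SetPartitionC.pmn n := by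
  rcases h.cases_tail with h' | ⟨c, _, hc⟩
  · exact absurd h'.symm hxy
  · exact arel_mem_snd hV hc

include hV in
lemma fwd_total : ∀ (k : ℕ) (x y z : ℤ), (2 * n + 1 - nestOrd n x).toNat ≤ k →
    RT x y → RT x z → RT y z ∨ RT z y := by
  intro k
  induction k with
  | zero =>
    intro x y z hk h1 h2
    rcases h1.cases_head with rfl | ⟨c, hc, _⟩
    · exact Or.inl h2
    · exfalso
      have hx := arel_mem_fst hV hc
      have hc' := arel_mem_snd hV hc
      have b1 := nestOrd_bounds hx
      have b2 := nestOrd_bounds hc'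
      have := arel_lt hV hc
      omega
  | succ k ih =>
    intro x y z hk h1 h2
    rcases h1.cases_head with rfl | ⟨c, hc, hcy⟩
    · exact Or.inl h2
    · rcases h2.cases_head with rfl | ⟨c', hc', hcz⟩
      · exact Or.inr h1
      · have hcc : c = c' := arel_functional hV hc hc'
        subst hcc
        apply ih c y z _ hcy hcz
        have hx := arel_mem_fst hV hc
        have hc2 := arel_mem_snd hV hc
        have b1 := nestOrd_bounds hx
        have b2 := nestOrd_bounds hc2
        have := arel_lt hV hc
        omega

include hV in
lemma bwd_total : ∀ (k : ℕ) (x y z : ℤ), (nestOrd n x).toNat ≤ k →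
    RT y x → RT z x → RT y z ∨ RT z y := by
  intro k
  induction k with
  | zero =>
    intro x y z hk h1 h2
    rcases h1.cases_tail with rfl | ⟨c, _, hc⟩
    · exact Or.inr h2
    · exfalso
      have hx := arel_mem_snd hV hc
      have hc' := arel_mem_fst hV hc
      have b1 := nestOrd_bounds hx
      have b2 := nestOrd_bounds hc'
      have := arel_lt hV hc
      omega
  | succ k ih =>
    intro x y z hk h1 h2
    rcases h1.cases_tail with rfl | ⟨c, hyc, hc⟩
    · exact Or.inr h2
    · rcases h2.cases_tail with rfl | ⟨c', hzc, hc'⟩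
      · exact Or.inl h1
      · have hcc : c = c' := arel_inj hV hc hc'
        subst hcc
        apply ih c y z _ hyc hzc
        have hx := arel_mem_snd hV hc
        have hc2 := arel_mem_fst hV hc
        have b1 := nestOrd_bounds hx
        have b2 := nestOrd_bounds hc2
        have := arel_lt hV hc
        omega

include hV in
lemma eqvGen_comparable {x y : ℤ} (h : EqvGen (arel A) x y) : RT x y ∨ RT y x := by
  induction h with
  | rel a b hab => exact Or.inl (Relation.ReflTransGen.single hab)
  | refl a => exact Or.inl Relation.ReflTransGen.refl
  | symm a b _ ih => exact ih.symm
  | trans a b c _ _ ih1 ih2 =>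
    rcases ih1 with h1 | h1 <;> rcases ih2 with h2 | h2
    · exact Or.inl (h1.trans h2)
    · exact bwd_total hV (nestOrd n b).toNat b a c (le_refl _) h1 h2
    · exact fwd_total hV (2 * n + 1 - nestOrd n b).toNat b a c (le_refl _) h1 h2
    · exact Or.inr (h2.trans h1)

end RTG

lemma eqvGen_neg {A : Finset (ℤ × ℤ)} {x y : ℤ} (h : EqvGen (arel A) x y) :
    EqvGen (arel A) (-x) (-y) := by
  induction h with
  | rel a b hab => exact EqvGen.symm _ _ (EqvGen.rel _ _ (arel_neg.1 hab))
  | refl a => exact EqvGen.refl _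
  | symm a b _ ih => exact EqvGen.symm _ _ ih
  | trans a b c _ _ ih1 ih2 => exact EqvGen.trans _ _ _ ih1 ih2

/-- the blocks generated by a valid arc set -/
def blocksOf (n : ℕ) (A : Finset (ℤ × ℤ)) : Finset (Finset ℤ) :=
  (SetPartitionC.pmn n).image fun x =>
    (SetPartitionC.pmn n).filter fun y => EqvGen (arel A) x y

lemma mem_class_iff {A : Finset (ℤ × ℤ)} {x y : ℤ} :
    y ∈ (SetPartitionC.pmn n).filter (fun y => EqvGen (arel A) x y) ↔
      y ∈ SetPartitionC.pmn n ∧ EqvGen (arel A) x y := Finset.mem_filter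

lemma class_eq_of_eqv {A : Finset (ℤ × ℤ)} {x y : ℤ} (h : EqvGen (arel A) x y) :
    ((SetPartitionC.pmn n).filter fun z => EqvGen (arel A) x z) =
      (SetPartitionC.pmn n).filter fun z => EqvGen (arel A) y z := by
  apply Finset.filter_congr
  intro z _
  constructor
  · intro h2
    exact EqvGen.trans _ _ _ (EqvGen.symm _ _ h) h2
  · intro h2
    exact EqvGen.trans _ _ _ h h2

/-- the set partition generated by a valid arc set -/
def fromArcs (A : Finset (ℤ × ℤ)) (hV : ValidArcs n A) : SetPartitionC n where
  blocks := blocksOf n A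
  nonempty := by
    intro B hB
    rw [blocksOf, Finset.mem_image] at hB
    obtain ⟨x, hx, rfl⟩ := hB
    exact ⟨x, Finset.mem_filter.2 ⟨hx, EqvGen.refl x⟩⟩
  disj := by
    intro B hB B' hB' hne
    rw [blocksOf, Finset.mem_image] at hB hB'
    obtain ⟨x, hx, rfl⟩ := hB
    obtain ⟨y, hy, rfl⟩ := hB'
    rw [Finset.disjoint_left]
    intro z hz hz'
    rw [Finset.mem_filter] at hz hz'
    exact hne (by
      rw [class_eq_of_eqv hz.2, class_eq_of_eqv hz'.2])
  cover := by
    intro i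
    constructor
    · rintro ⟨B, hB, hi⟩
      rw [blocksOf, Finset.mem_image] at hB
      obtain ⟨x, hx, rfl⟩ := hB
      exact mem_pmn.1 (Finset.mem_filter.1 hi).1
    · intro hi
      rw [← mem_pmn] at hi
      exact ⟨_, Finset.mem_image_of_mem _ hi, Finset.mem_filter.2 ⟨hi, EqvGen.refl i⟩⟩
  symm := by
    intro B hB
    rw [blocksOf, Finset.mem_image] at hB
    obtain ⟨x, hx, rfl⟩ := hB
    have : negSet ((SetPartitionC.pmn n).filter fun y => EqvGen (arel A) x y) =
        (SetPartitionC.pmn n).filter fun y => EqvGen (arel A) (-x) y := by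
      ext y
      rw [mem_negSet, Finset.mem_filter, Finset.mem_filter]
      constructor
      · rintro ⟨h1, h2⟩
        refine ⟨by simpa using neg_mem_pmn h1, ?_⟩
        have := eqvGen_neg h2
        rwa [neg_neg] at this
      · rintro ⟨h1, h2⟩
        refine ⟨neg_mem_pmn h1, ?_⟩
        have := eqvGen_neg h2
        rwa [neg_neg] at this
    rw [this, blocksOf, Finset.mem_image]
    exact ⟨-x, neg_mem_pmn hx, rfl⟩
  zeroBlock := by
    intro B hB B' hB' hsB hsB'
    have central : ∀ C ∈ blocksOf n A, negSet C = C → ∃ y : ℤ, 0 < y ∧ (y, -y) ∈ A ∧ y ∈ C := by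
      intro C hC hsC
      rw [blocksOf, Finset.mem_image] at hC
      obtain ⟨x, hx, rfl⟩ := hC
      set C := (SetPartitionC.pmn n).filter fun y => EqvGen (arel A) x y with hCdef
      have hxC : x ∈ C := Finset.mem_filter.2 ⟨hx, EqvGen.refl x⟩
      have hCpos : (C.filter (fun z => 0 < z)).Nonempty := by
        rcases lt_trichotomy x 0 with h | h | h
        · refine ⟨-x, Finset.mem_filter.2 ⟨?_, by omega⟩⟩
          rw [← hsC, mem_negSet, neg_neg]; exact hxC
        · exact absurd h (mem_pmn.1 hx).1
        · exact ⟨x, Finset.mem_filter.2 ⟨hxC, h⟩⟩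
      obtain ⟨y, hyl, hymax⟩ := Finset.exists_max_image _ id hCpos
      rw [Finset.mem_filter] at hyl
      obtain ⟨hyC, hypos⟩ := hyl
      have hyp : y ∈ SetPartitionC.pmn n := (Finset.mem_filter.1 hyC).1
      have hnyC : -y ∈ C := by rw [← hsC, mem_negSet, neg_neg]; exact hyC
      have heq : EqvGen (arel A) y (-y) :=
        EqvGen.trans _ _ _ (EqvGen.symm _ _ (Finset.mem_filter.1 hyC).2)
          (Finset.mem_filter.1 hnyC).2
      have hlt : nestOrd n y < nestOrd n (-y) := by
        have b := nestOrd_bounds hyp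
        rw [nestOrd_neg hyp]
        have : nestOrd n y ≤ (n : ℤ) := b.2.2.1 hypos
        omega
      have hrt : Relation.ReflTransGen (arel A) y (-y) := by
        rcases eqvGen_comparable hV heq with h | h
        · exact h
        · exact absurd (rt_le hV h) (not_le.2 hlt)
      rcases hrt.cases_head with h | ⟨w, hw, hwy⟩
      · exfalso; omega
      · have hwC : w ∈ C := by
          refine Finset.mem_filter.2 ⟨arel_mem_snd hV hw, ?_⟩
          exact EqvGen.trans _ _ _ (Finset.mem_filter.1 hyC).2 (EqvGen.rel _ _ hw)
        have hwp : w ∈ SetPartitionC.pmn n := arel_mem_snd hV hw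
        have hweq : w = -y := by
          by_contra hne
          have h1 : nestOrd n w < nestOrd n (-y) := by
            have := rt_le hV hwy
            rcases lt_or_eq_of_le this with h | h
            · exact h
            · exact absurd (nestOrd_inj hwp (neg_mem_pmn hyp) h) hne
          have h2 : nestOrd n y < nestOrd n w := arel_lt hV hw
          rw [nestOrd_neg hyp] at h1
          have by' := nestOrd_bounds hyp
          have bw := nestOrd_bounds hwp
          rcases lt_trichotomy w 0 with hw0 | hw0 | hw0
          · have hnwC : -w ∈ C := by rw [← hsC, mem_negSet, neg_neg]; exact hwC
            have : -w ∈ C.filter (fun z => 0 < z) := Finset.mem_filter.2 ⟨hnwC, by omega⟩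
            have hle := hymax _ this
            simp only [id] at hle
            have e1 : nestOrd n w = 2*(n:ℤ)+1+w := nestOrd_of_neg (by omega)
            have e2 : nestOrd n y = y := nestOrd_of_pos hypos
            omega
          · exact absurd hw0 (mem_pmn.1 hwp).1
          · have : w ∈ C.filter (fun z => 0 < z) := Finset.mem_filter.2 ⟨hwC, hw0⟩
            have hle := hymax _ this
            simp only [id] at hle
            rw [nestOrd_of_pos hypos, nestOrd_of_pos hw0] at h2
            omega
        subst hweq
        rcases hw with hw | hw
        · exact ⟨y, hypos, hw, hyC⟩
        · rw [neg_neg] at hw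
          exact ⟨y, hypos, hw, hyC⟩
    obtain ⟨y, hy0, hyA, hyB⟩ := central B hB hsB
    obtain ⟨y', hy'0, hy'A, hy'B⟩ := central B' hB' hsB'
    have : (y, -y) = (y', -y') := hV.2.2.2.2 _ hyA _ hy'A (by simp) (by simp)
    have hyy : y = y' := congrArg Prod.fst this
    subst hyy
    -- same element in both blocks
    rw [blocksOf, Finset.mem_image] at hB hB'
    obtain ⟨x, hx, rfl⟩ := hB
    obtain ⟨x', hx', rfl⟩ := hB'
    rw [class_eq_of_eqv (Finset.mem_filter.1 hyB).2, class_eq_of_eqv (Finset.mem_filter.1 hy'B).2]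

end KZaux
namespace KZaux
open Relation

variable {n : ℕ}

def toArcs (P : SetPartitionC n) : Finset (ℤ × ℤ) := P.arcs.filter fun p => 0 < p.1

lemma block_pmn (P : SetPartitionC n) {B : Finset ℤ} {x : ℤ} (hB : B ∈ P.blocks)
    (hx : x ∈ B) : x ∈ SetPartitionC.pmn n := by
  rw [mem_pmn]; exact (P.cover x).1 ⟨B, hB, hx⟩

lemma block_eq (P : SetPartitionC n) {B B' : Finset ℤ} {x : ℤ} (hB : B ∈ P.blocks)
    (hB' : B' ∈ P.blocks) (hx : x ∈ B) (hx' : x ∈ B') : B = B' := by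
  by_contra hne
  exact Finset.disjoint_left.1 (P.disj B hB B' hB' hne) hx hx'

lemma mem_arcs {P : SetPartitionC n} {p : ℤ × ℤ} :
    p ∈ P.arcs ↔ p.1 ∈ SetPartitionC.pmn n ∧ p.2 ∈ SetPartitionC.pmn n ∧
      P.IsArc p.1 p.2 := by
  rw [SetPartitionC.arcs, Finset.mem_filter, Finset.mem_product]
  tauto

lemma mem_toArcs {P : SetPartitionC n} {p : ℤ × ℤ} :
    p ∈ toArcs P ↔ p.1 ∈ SetPartitionC.pmn n ∧ p.2 ∈ SetPartitionC.pmn n ∧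
      P.IsArc p.1 p.2 ∧ 0 < p.1 := by
  rw [toArcs, Finset.mem_filter, mem_arcs]
  tauto

lemma isArc_neg {P : SetPartitionC n} {x y : ℤ} (h : P.IsArc x y)
    (hx : x ∈ SetPartitionC.pmn n) (hy : y ∈ SetPartitionC.pmn n) :
    P.IsArc (-y) (-x) := by
  obtain ⟨hlt, B, hB, hxB, hyB, hbet⟩ := h
  refine ⟨by rw [nestOrd_neg hx, nestOrd_neg hy]; omega, negSet B, P.symm B hB,
    by rw [mem_negSet, neg_neg]; exact hyB, by rw [mem_negSet, neg_neg]; exact hxB, ?_⟩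
  rintro k hk ⟨h1, h2⟩
  have hkB : -k ∈ B := mem_negSet.1 hk
  have hkp : -k ∈ SetPartitionC.pmn n := block_pmn P hB hkB
  have hkp' : k ∈ SetPartitionC.pmn n := by
    have := neg_mem_pmn hkp; rwa [neg_neg] at this
  rw [nestOrd_neg hy] at h1
  rw [nestOrd_neg hx] at h2
  refine hbet (-k) hkB ⟨?_, ?_⟩ <;> rw [nestOrd_neg hkp'] <;> omega

lemma arc_succ_unique {P : SetPartitionC n} {i j j' : ℤ} (h : P.IsArc i j)
    (h' : P.IsArc i j') : j = j' := by
  obtain ⟨hlt, B, hB, hiB, hjB, hbet⟩ := h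
  obtain ⟨hlt', B', hB', hiB', hjB', hbet'⟩ := h'
  have hBB : B = B' := block_eq P hB hB' hiB hiB'
  subst hBB
  rcases lt_trichotomy (nestOrd n j) (nestOrd n j') with hc | hc | hc
  · exact absurd ⟨hlt, hc⟩ (hbet' j hjB)
  · exact nestOrd_inj (block_pmn P hB hjB) (block_pmn P hB hjB') hc
  · exact absurd ⟨hlt', hc⟩ (hbet j' hjB')

lemma arc_pred_unique {P : SetPartitionC n} {i j j' : ℤ} (h : P.IsArc j i)
    (h' : P.IsArc j' i) : j = j' := by
  obtain ⟨hlt, B, hB, hjB, hiB, hbet⟩ := h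
  obtain ⟨hlt', B', hB', hjB', hiB', hbet'⟩ := h'
  have hBB : B = B' := block_eq P hB hB' hiB hiB'
  subst hBB
  rcases lt_trichotomy (nestOrd n j) (nestOrd n j') with hc | hc | hc
  · exact absurd ⟨hc, hlt'⟩ (hbet j' hjB')
  · exact nestOrd_inj (block_pmn P hB hjB) (block_pmn P hB hjB') hc
  · exact absurd ⟨hc, hlt⟩ (hbet' j hjB)

lemma toArcs_valid (P : SetPartitionC n) : ValidArcs n (toArcs P) := by
  refine ⟨?_, ?_, ?_, ?_, ?_⟩
  · intro p hp
    obtain ⟨h1, h2, h3, h4⟩ := mem_toArcs.1 hp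
    have m1 := mem_pmn.1 h1
    have m2 := mem_pmn.1 h2
    rw [abs_le] at m1
    exact ⟨h4, by omega, m2.1, m2.2, h3.1⟩
  · intro p hp q hq h
    obtain ⟨_, _, h3, _⟩ := mem_toArcs.1 hp
    obtain ⟨_, _, h3', _⟩ := mem_toArcs.1 hq
    rw [h] at h3
    have := arc_succ_unique h3 h3'
    exact Prod.ext h this
  · intro p hp q hq h
    obtain ⟨_, _, h3, _⟩ := mem_toArcs.1 hp
    obtain ⟨_, _, h3', _⟩ := mem_toArcs.1 hq
    rw [h] at h3
    have := arc_pred_unique h3 h3'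
    exact Prod.ext this h
  · intro p hp h2
    obtain ⟨h1', h2', h3, h4⟩ := mem_toArcs.1 hp
    rw [mem_toArcs]
    refine ⟨neg_mem_pmn h2', neg_mem_pmn h1', isArc_neg h3 h1' h2', by omega⟩
  · intro p hp q hq h1 h2
    obtain ⟨hp1, hp2, hp3, hp4⟩ := mem_toArcs.1 hp
    obtain ⟨hq1, hq2, hq3, hq4⟩ := mem_toArcs.1 hq
    obtain ⟨hlt, B, hB, hxB, hyB, hbet⟩ := hp3
    obtain ⟨hlt', B', hB', hxB', hyB', hbet'⟩ := hq3
    -- both blocks are self-negative, hence equal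
    have hselfB : negSet B = B := by
      apply block_eq P (x := p.1) (P.symm B hB) hB
      · rw [mem_negSet, ← h1]; exact hyB
      · exact hxB
    have hselfB' : negSet B' = B' := by
      apply block_eq P (x := q.1) (P.symm B' hB') hB'
      · rw [mem_negSet, ← h2]; exact hyB'
      · exact hxB'
    have hBB : B = B' := P.zeroBlock B hB B' hB' hselfB hselfB'
    subst hBB
    -- p.1 and q.1 are both positive elements whose arc goes to their negative
    have e1 : nestOrd n p.1 = p.1 := nestOrd_of_pos hp4
    have e2 : nestOrd n q.1 = q.1 := nestOrd_of_pos hq4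
    have e3 : nestOrd n p.2 = 2 * n + 1 - p.1 := by
      rw [h1, nestOrd_neg hp1, e1]
    have e4 : nestOrd n q.2 = 2 * n + 1 - q.1 := by
      rw [h2, nestOrd_neg hq1, e2]
    have hpq : p.1 = q.1 := by
      rcases lt_trichotomy p.1 q.1 with hc | hc | hc
      · exact absurd ⟨by omega, by omega⟩ (hbet q.1 hxB')
      · exact hc
      · exact absurd ⟨by omega, by omega⟩ (hbet' p.1 hxB)
    have : p.2 = q.2 := by rw [h1, h2, hpq]
    exact Prod.ext hpq this

/-- consecutive elements of a block are joined by the symmetrized arc relation -/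
lemma eqv_up (P : SetPartitionC n) : ∀ (k : ℕ) (B : Finset ℤ) (x y : ℤ), B ∈ P.blocks →
    x ∈ B → y ∈ B → nestOrd n x < nestOrd n y →
    (nestOrd n y - nestOrd n x).toNat ≤ k → EqvGen (arel (toArcs P)) x y := by
  intro k
  induction k with
  | zero => intro B x y _ _ _ h hk; omega
  | succ k ih =>
    intro B x y hB hx hy h hk
    by_cases hbet : ∃ z ∈ B, nestOrd n x < nestOrd n z ∧ nestOrd n z < nestOrd n y
    · obtain ⟨z, hz, hz1, hz2⟩ := hbet
      exact EqvGen.trans _ _ _ (ih B x z hB hx hz hz1 (by omega))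
        (ih B z y hB hz hy hz2 (by omega))
    · push_neg at hbet
      have hxp : x ∈ SetPartitionC.pmn n := block_pmn P hB hx
      have hyp : y ∈ SetPartitionC.pmn n := block_pmn P hB hy
      have harc : P.IsArc x y := by
        refine ⟨h, B, hB, hx, hy, ?_⟩
        rintro z hz ⟨h1, h2⟩
        exact absurd (hbet z hz h1) (not_le.2 h2)
      rcases lt_trichotomy 0 x with hx0 | hx0 | hx0
      · refine EqvGen.rel _ _ (Or.inl (mem_toArcs.2 ⟨hxp, hyp, harc, hx0⟩))
      · exact absurd hx0.symm (mem_pmn.1 hxp).1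
      · have hy0 : y < 0 := by
          by_contra hy0
          have hy0' : 0 < y := lt_of_le_of_ne (not_lt.1 hy0) (Ne.symm (mem_pmn.1 hyp).1)
          have b1 := (nestOrd_bounds hxp).2.2.2 hx0
          have b2 := (nestOrd_bounds hyp).2.2.1 hy0'
          omega
        refine EqvGen.rel _ _ (Or.inr (mem_toArcs.2
          ⟨neg_mem_pmn hyp, neg_mem_pmn hxp, isArc_neg harc hxp hyp, by omega⟩))

lemma eqv_of_sameBlock (P : SetPartitionC n) {B : Finset ℤ} {x y : ℤ} (hB : B ∈ P.blocks)
    (hx : x ∈ B) (hy : y ∈ B) : EqvGen (arel (toArcs P)) x y := by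
  rcases lt_trichotomy (nestOrd n x) (nestOrd n y) with h | h | h
  · exact eqv_up P _ B x y hB hx hy h (le_refl _)
  · rw [nestOrd_inj (block_pmn P hB hx) (block_pmn P hB hy) h]
    exact EqvGen.refl _
  · exact EqvGen.symm _ _ (eqv_up P _ B y x hB hy hx h (le_refl _))

lemma sameBlock_of_arel (P : SetPartitionC n) {x y : ℤ} (h : arel (toArcs P) x y) :
    ∃ B ∈ P.blocks, x ∈ B ∧ y ∈ B := by
  rcases h with h | h
  · obtain ⟨_, _, ⟨_, B, hB, h1, h2, _⟩, _⟩ := mem_toArcs.1 h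
    exact ⟨B, hB, h1, h2⟩
  · obtain ⟨_, _, ⟨_, B, hB, h1, h2, _⟩, _⟩ := mem_toArcs.1 h
    refine ⟨negSet B, P.symm B hB, ?_, ?_⟩ <;> rw [mem_negSet]
    · exact h2
    · exact h1

lemma sameBlock_of_eqv (P : SetPartitionC n) {x y : ℤ}
    (h : EqvGen (arel (toArcs P)) x y) : x = y ∨ ∃ B ∈ P.blocks, x ∈ B ∧ y ∈ B := by
  induction h with
  | rel a b hab => exact Or.inr (sameBlock_of_arel P hab)
  | refl a => exact Or.inl rfl
  | symm a b _ ih =>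
    rcases ih with rfl | ⟨B, hB, h1, h2⟩
    · exact Or.inl rfl
    · exact Or.inr ⟨B, hB, h2, h1⟩
  | trans a b c _ _ ih1 ih2 =>
    rcases ih1 with rfl | ⟨B, hB, h1, h2⟩
    · exact ih2
    · rcases ih2 with rfl | ⟨B', hB', h1', h2'⟩
      · exact Or.inr ⟨B, hB, h1, h2⟩
      · exact Or.inr ⟨B, hB, h1, (block_eq P hB' hB h1' h2) ▸ h2'⟩

lemma class_eq_block (P : SetPartitionC n) {B : Finset ℤ} {x : ℤ} (hB : B ∈ P.blocks)
    (hx : x ∈ B) :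
    ((SetPartitionC.pmn n).filter fun y => EqvGen (arel (toArcs P)) x y) = B := by
  ext y
  rw [Finset.mem_filter]
  constructor
  · rintro ⟨h1, h2⟩
    rcases sameBlock_of_eqv P h2 with rfl | ⟨B', hB', h3, h4⟩
    · exact hx
    · exact (block_eq P hB' hB h3 hx) ▸ h4
  · intro hy
    exact ⟨block_pmn P hB hy, eqv_of_sameBlock P hB hx hy⟩

lemma blocksOf_toArcs (P : SetPartitionC n) : blocksOf n (toArcs P) = P.blocks := by
  ext B
  rw [blocksOf, Finset.mem_image]
  constructor
  · rintro ⟨x, hx, rfl⟩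
    obtain ⟨Bx, hBx, hxBx⟩ := (P.cover x).2 (mem_pmn.1 hx)
    rw [class_eq_block P hBx hxBx]
    exact hBx
  · intro hB
    obtain ⟨x, hx⟩ := P.nonempty B hB
    exact ⟨x, block_pmn P hB hx, class_eq_block P hB hx⟩

lemma partC_ext {P Q : SetPartitionC n} (h : P.blocks = Q.blocks) : P = Q := by
  cases P; cases Q
  simp only at h
  subst h
  rfl

lemma fromArcs_toArcs (P : SetPartitionC n) :
    fromArcs (toArcs P) (toArcs_valid P) = P :=
  partC_ext (blocksOf_toArcs P)

lemma toArcs_fromArcs {A : Finset (ℤ × ℤ)} (hV : ValidArcs n A) :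
    toArcs (fromArcs A hV) = A := by
  ext p
  constructor
  · intro hp
    obtain ⟨hp1, hp2, ⟨hlt, B, hB, hxB, hyB, hbet⟩, hpos⟩ := mem_toArcs.1 hp
    have hBdef : B ∈ blocksOf n A := hB
    rw [blocksOf, Finset.mem_image] at hBdef
    obtain ⟨c, hc, rfl⟩ := hBdef
    have heqv : EqvGen (arel A) p.1 p.2 :=
      EqvGen.trans _ _ _ (EqvGen.symm _ _ (Finset.mem_filter.1 hxB).2)
        (Finset.mem_filter.1 hyB).2
    have hrt : Relation.ReflTransGen (arel A) p.1 p.2 := by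
      rcases eqvGen_comparable hV heqv with h | h
      · exact h
      · exact absurd (rt_le hV h) (not_le.2 hlt)
    rcases hrt.cases_head with he | ⟨w, hw, hwp⟩
    · rw [he] at hlt; omega
    · have hweq : w = p.2 := by
        by_contra hne
        have h1 : nestOrd n w < nestOrd n p.2 := by
          rcases lt_or_eq_of_le (rt_le hV hwp) with h | h
          · exact h
          · exact absurd (nestOrd_inj (arel_mem_snd hV hw) hp2 h) hne
        have hwB : w ∈ (SetPartitionC.pmn n).filter fun y => EqvGen (arel A) c y := by
          refine Finset.mem_filter.2 ⟨arel_mem_snd hV hw, ?_⟩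
          exact EqvGen.trans _ _ _ (Finset.mem_filter.1 hxB).2 (EqvGen.rel _ _ hw)
        exact hbet w hwB ⟨arel_lt hV hw, h1⟩
      subst hweq
      rcases hw with hw | hw
      · simpa using hw
      · have h0 : (-p.2, -p.1).2 < 0 := by simp only [neg_lt_zero]; exact hpos
        have := hV.2.2.2.1 _ hw h0
        simpa using this
  · intro hp
    have hc := cond1' hV hp
    have hp1 : p.1 ∈ SetPartitionC.pmn n := by rw [mem_pmn, abs_le]; exact ⟨by omega, by omega⟩
    have hp2 : p.2 ∈ SetPartitionC.pmn n := by rw [mem_pmn, abs_le]; exact ⟨by omega, by omega⟩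
    have harel : arel A p.1 p.2 := Or.inl (by simpa using hp)
    rw [mem_toArcs]
    refine ⟨hp1, hp2, ⟨hc.2.2.2.2.2, (SetPartitionC.pmn n).filter
      (fun y => EqvGen (arel A) p.1 y), ?_, ?_, ?_, ?_⟩, hc.1⟩
    · exact Finset.mem_image_of_mem _ hp1
    · exact Finset.mem_filter.2 ⟨hp1, EqvGen.refl _⟩
    · exact Finset.mem_filter.2 ⟨hp2, EqvGen.rel _ _ harel⟩
    · rintro k hk ⟨h1, h2⟩
      have hk2 := (Finset.mem_filter.1 hk).2
      rcases eqvGen_comparable hV hk2 with h | h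
      · rcases h.cases_head with he | ⟨w, hw, hwk⟩
        · rw [← he] at h1; omega
        · have : w = p.2 := arel_functional hV hw harel
          subst this
          exact absurd (rt_le hV hwk) (not_le.2 h2)
      · exact absurd (rt_le hV h) (not_le.2 h1)

/-! ### openers and closers in terms of arcs -/

lemma openers_eq (P : SetPartitionC n) : P.openers = srcs (toArcs P) := by
  ext i
  rw [SetPartitionC.openers, Finset.mem_filter, srcs, Finset.mem_image, Finset.mem_Icc]
  constructor
  · rintro ⟨⟨hi1, hi2⟩, B, hB, hiB, j, hjB, hj⟩
    have hne : (B.filter fun y => nestOrd n i < nestOrd n y).Nonempty :=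
      ⟨j, Finset.mem_filter.2 ⟨hjB, hj⟩⟩
    obtain ⟨y, hy, hymin⟩ := Finset.exists_min_image _ (fun y => nestOrd n y) hne
    rw [Finset.mem_filter] at hy
    refine ⟨(i, y), mem_toArcs.2 ⟨?_, block_pmn P hB hy.1, ⟨hy.2, B, hB, hiB, hy.1, ?_⟩,
      by omega⟩, rfl⟩
    · rw [mem_pmn, abs_le]; exact ⟨by omega, by omega, by omega⟩
    · rintro k hk ⟨h1, h2⟩
      exact absurd (hymin k (Finset.mem_filter.2 ⟨hk, h1⟩)) (not_le.2 h2)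
  · rintro ⟨q, hq, rfl⟩
    obtain ⟨h1, h2, ⟨hlt, B, hB, hxB, hyB, _⟩, hpos⟩ := mem_toArcs.1 hq
    have m1 := mem_pmn.1 h1
    rw [abs_le] at m1
    exact ⟨⟨by omega, by omega⟩, B, hB, hxB, q.2, hyB, hlt⟩

lemma closers_eq (P : SetPartitionC n) :
    P.closers = tgts ((toArcs P).filter fun p => 0 < p.2) := by
  ext i
  rw [SetPartitionC.closers, Finset.mem_filter, tgts, Finset.mem_image, Finset.mem_Icc]
  constructor
  · rintro ⟨⟨hi1, hi2⟩, B, hB, hiB, j, hjB, hj⟩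
    have hne : (B.filter fun y => nestOrd n y < nestOrd n i).Nonempty :=
      ⟨j, Finset.mem_filter.2 ⟨hjB, hj⟩⟩
    obtain ⟨y, hy, hymax⟩ := Finset.exists_max_image _ (fun y => nestOrd n y) hne
    rw [Finset.mem_filter] at hy
    have hyp : y ∈ SetPartitionC.pmn n := block_pmn P hB hy.1
    have hip : i ∈ SetPartitionC.pmn n := by rw [mem_pmn, abs_le]; exact ⟨by omega, by omega⟩
    have hy0 : 0 < y := by
      rcases lt_trichotomy 0 y with h | h | h
      · exact h
      · exact absurd h.symm (mem_pmn.1 hyp).1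
      · exfalso
        have b1 := (nestOrd_bounds hyp).2.2.2 h
        have b2 := (nestOrd_bounds hip).2.2.1 (by omega)
        omega
    refine ⟨(y, i), Finset.mem_filter.2 ⟨mem_toArcs.2 ⟨hyp, hip,
      ⟨hy.2, B, hB, hy.1, hiB, ?_⟩, hy0⟩, show (0:ℤ) < i by omega⟩, rfl⟩
    rintro k hk ⟨h1, h2⟩
    exact absurd (hymax k (Finset.mem_filter.2 ⟨hk, h2⟩)) (not_le.2 h1)
  · rintro ⟨q, hq, rfl⟩
    rw [Finset.mem_filter] at hq
    obtain ⟨h1, h2, ⟨hlt, B, hB, hxB, hyB, _⟩, hpos⟩ := mem_toArcs.1 hq.1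
    have m2 := mem_pmn.1 h2
    rw [abs_le] at m2
    exact ⟨⟨by omega, by omega⟩, B, hB, hyB, q.1, hxB, hlt⟩

end KZaux
namespace KZaux

variable {n : ℕ}

lemma crossOrd_of_pos {i : ℤ} (h : 0 < i) : crossOrd n i = i := if_pos h

lemma crossOrd_of_neg {i : ℤ} (h : ¬ 0 < i) : crossOrd n i = (n : ℤ) - i := if_neg h

section
variable {A : Finset (ℤ × ℤ)} (hV : ValidArcs n A)
include hV

lemma pos_snd_lt {p : ℤ × ℤ} (hp : p ∈ A) (h : 0 < p.2) : p.1 < p.2 := by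
  have hc := cond1' hV hp
  have e1 : nestOrd n p.1 = p.1 := nestOrd_of_pos hc.1
  have e2 : nestOrd n p.2 = p.2 := nestOrd_of_pos h
  omega

lemma cpr_of_mem {p : ℤ × ℤ} (hp : p ∈ A) : cpr n p = (p.1, crossOrd n p.2) := by
  have hc := cond1' hV hp
  have h1 : crossOrd n p.1 = p.1 := crossOrd_of_pos hc.1
  have h2 : p.1 < crossOrd n p.2 := by
    rcases lt_trichotomy 0 p.2 with h | h | h
    · rw [crossOrd_of_pos h]; exact pos_snd_lt hV hp h
    · exact absurd h.symm hc.2.2.1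
    · rw [crossOrd_of_neg (by omega)]; omega
  rw [cpr, h1, min_eq_left (le_of_lt h2), max_eq_right (le_of_lt h2)]

lemma crossRel_iff {p q : ℤ × ℤ} (hp : p ∈ A) (hq : q ∈ A) :
    CrossRel n p q ↔ p.1 < q.1 ∧ q.1 < crossOrd n p.2 ∧ crossOrd n p.2 < crossOrd n q.2 := by
  rw [CrossRel, cpr_of_mem hV hp, cpr_of_mem hV hq]

lemma cross_sign {p q : ℤ × ℤ} (hp : p ∈ A) (hq : q ∈ A) (h : CrossRel n p q)
    (h2 : p.2 < 0) : q.2 < 0 := by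
  rw [crossRel_iff hV hp hq] at h
  have hcp := cond1' hV hp
  have hcq := cond1' hV hq
  by_contra h3
  rw [crossOrd_of_neg (by omega), crossOrd_of_pos (by omega)] at h
  omega

lemma nest_sign {p q : ℤ × ℤ} (hp : p ∈ A) (hq : q ∈ A) (h : NestRel n p q)
    (h2 : q.2 < 0) : p.2 < 0 := by
  obtain ⟨_, h⟩ := h
  have hcp := cond1' hV hp
  have hcq := cond1' hV hq
  by_contra h3
  rw [nestOrd_of_neg (by omega), nestOrd_of_pos (by omega)] at h
  omega

lemma tail_cross_iff_nest {p q : ℤ × ℤ} (hp : p ∈ A) (hq : q ∈ A)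
    (h1 : p.2 < 0) (h2 : q.2 < 0) : CrossRel n p q ↔ NestRel n p q := by
  have hcp := cond1' hV hp
  have hcq := cond1' hV hq
  rw [crossRel_iff hV hp hq, NestRel,
    crossOrd_of_neg (by omega), crossOrd_of_neg (by omega),
    nestOrd_of_pos hcp.1, nestOrd_of_pos hcq.1,
    nestOrd_of_neg (by omega), nestOrd_of_neg (by omega)]
  omega

lemma mem_srcs_arc {o : ℤ} (h : o ∈ srcs A) : ∃ q ∈ A, q.1 = o := by
  rw [srcs, Finset.mem_image] at h
  obtain ⟨q, hq, hq1⟩ := h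
  exact ⟨q, hq, hq1⟩

/-- crossings split into tail-tail pairs and the `Fst` statistic -/
lemma crStat_decomp :
    ((A ×ˢ A).filter fun z => CrossRel n z.1 z.2).card
      = (((A ×ˢ A).filter fun z => CrossRel n z.1 z.2).filter fun z => z.1.2 < 0).card
        + Fst (srcs A) (A.filter fun p => 0 < p.2) := by
  set X := (A ×ˢ A).filter fun z => CrossRel n z.1 z.2 with hX
  rw [← Finset.card_filter_add_card_filter_not (s := X) (p := fun z => z.1.2 < 0)]
  congr 1
  rw [Fst, ← Finset.card_sigma]
  apply Finset.card_bij (fun z _ => (⟨z.1, z.2.1⟩ : Σ _ : ℤ × ℤ, ℤ))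
  · rintro z hz
    rw [Finset.mem_filter, hX, Finset.mem_filter, Finset.mem_product] at hz
    obtain ⟨⟨⟨hz1, hz2⟩, hcr⟩, hsign⟩ := hz
    have hz12 : 0 < z.1.2 := by
      have := (cond1' hV hz1).2.2.1
      omega
    have hcr' := (crossRel_iff hV hz1 hz2).1 hcr
    rw [crossOrd_of_pos hz12] at hcr'
    refine Finset.mem_sigma.2 ⟨Finset.mem_filter.2 ⟨hz1, hz12⟩, ?_⟩
    show z.2.1 ∈ (avail (srcs A) (A.filter fun p => 0 < p.2) z.1.2).filter (z.1.1 < ·)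
    refine Finset.mem_filter.2 ⟨?_, hcr'.1⟩
    rw [avail, Finset.mem_filter]
    refine ⟨Finset.mem_image_of_mem _ hz2, hcr'.2.1, ?_⟩
    intro r hr hr1
    rw [Finset.mem_filter] at hr
    have : r = z.2 := hV.2.1 _ hr.1 _ hz2 hr1
    subst this
    rw [crossOrd_of_pos hr.2] at hcr'
    omega
  · rintro z hz z' hz' heq
    rw [Finset.mem_filter, hX, Finset.mem_filter, Finset.mem_product] at hz hz'
    have h1 : z.1 = z'.1 := congrArg Sigma.fst heq
    have h2 : z.2.1 = z'.2.1 := (Sigma.mk.inj_iff.1 heq).2.eq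
    have h3 : z.2 = z'.2 := hV.2.1 _ hz.1.1.2 _ hz'.1.1.2 h2
    exact Prod.ext h1 h3
  · rintro ⟨p, o⟩ hb
    obtain ⟨hq0, ho0⟩ := Finset.mem_sigma.1 hb
    have hp : p ∈ A.filter fun p => 0 < p.2 := hq0
    have ho : o ∈ (avail (srcs A) (A.filter fun p => 0 < p.2) p.2).filter (p.1 < ·) := ho0
    rw [Finset.mem_filter] at hp ho
    obtain ⟨hpA, hp2⟩ := hp
    obtain ⟨ho1, hlt⟩ := ho
    rw [avail, Finset.mem_filter] at ho1
    obtain ⟨hoO, holt, hoafter⟩ := ho1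
    obtain ⟨q, hq, hq1⟩ := mem_srcs_arc hV hoO
    refine ⟨(p, q), ?_, ?_⟩
    · rw [Finset.mem_filter, hX, Finset.mem_filter, Finset.mem_product]
      refine ⟨⟨⟨hpA, hq⟩, ?_⟩, show ¬ ((p, q).1.2 < 0) from by show ¬ (p.2 < 0); omega⟩
      rw [crossRel_iff hV hpA hq, crossOrd_of_pos hp2]
      show p.1 < q.1 ∧ q.1 < p.2 ∧ p.2 < crossOrd n q.2
      rw [hq1]
      refine ⟨hlt, holt, ?_⟩
      rcases lt_trichotomy 0 q.2 with h | h | h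
      · rw [crossOrd_of_pos h]
        have h5 := hoafter q (Finset.mem_filter.2 ⟨hq, h⟩) hq1
        rcases lt_or_eq_of_le h5 with h' | h'
        · exact h'
        · exfalso
          have := hV.2.2.1 _ hpA _ hq h'
          rw [this, hq1] at hlt
          omega
      · exact absurd h.symm (cond1' hV hq).2.2.1
      · rw [crossOrd_of_neg (by omega)]
        have := (cond1' hV hpA).2.2.2.2.1
        omega
    · show (⟨(p, q).1, (p, q).2.1⟩ : Σ _ : ℤ × ℤ, ℤ) = ⟨p, o⟩
      rw [Sigma.mk.inj_iff]
      exact ⟨rfl, by rw [heq_eq_eq]; exact hq1⟩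

/-- nestings split into tail-tail pairs and the `Gst` statistic -/
lemma neStat_decomp :
    ((A ×ˢ A).filter fun z => NestRel n z.1 z.2).card
      = (((A ×ˢ A).filter fun z => NestRel n z.1 z.2).filter fun z => z.2.2 < 0).card
        + Gst (srcs A) (A.filter fun p => 0 < p.2) := by
  set Y := (A ×ˢ A).filter fun z => NestRel n z.1 z.2 with hY
  rw [← Finset.card_filter_add_card_filter_not (s := Y) (p := fun z => z.2.2 < 0)]
  congr 1
  rw [Gst, ← Finset.card_sigma]
  apply Finset.card_bij (fun z _ => (⟨z.2, z.1.1⟩ : Σ _ : ℤ × ℤ, ℤ))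
  · rintro z hz
    rw [Finset.mem_filter, hY, Finset.mem_filter, Finset.mem_product] at hz
    obtain ⟨⟨⟨hz1, hz2⟩, hnr⟩, hsign⟩ := hz
    have hz22 : 0 < z.2.2 := by
      have := (cond1' hV hz2).2.2.1
      omega
    obtain ⟨hn1, hn2⟩ := hnr
    have c1 := cond1' hV hz1
    have c2 := cond1' hV hz2
    rw [nestOrd_of_pos c1.1, nestOrd_of_pos c2.1] at hn1
    rw [nestOrd_of_pos hz22] at hn2
    refine Finset.mem_sigma.2 ⟨Finset.mem_filter.2 ⟨hz2, hz22⟩, ?_⟩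
    show z.1.1 ∈ (avail (srcs A) (A.filter fun p => 0 < p.2) z.2.2).filter (· < z.2.1)
    refine Finset.mem_filter.2 ⟨?_, hn1⟩
    rw [avail, Finset.mem_filter]
    refine ⟨Finset.mem_image_of_mem _ hz1, ?_, ?_⟩
    · have := pos_snd_lt hV hz2 hz22
      omega
    · intro r hr hr1
      rw [Finset.mem_filter] at hr
      have : r = z.1 := hV.2.1 _ hr.1 _ hz1 hr1
      subst this
      rw [nestOrd_of_pos hr.2] at hn2
      omega
  · rintro z hz z' hz' heq
    rw [Finset.mem_filter, hY, Finset.mem_filter, Finset.mem_product] at hz hz'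
    have h1 : z.2 = z'.2 := congrArg Sigma.fst heq
    have h2 : z.1.1 = z'.1.1 := (Sigma.mk.inj_iff.1 heq).2.eq
    have h3 : z.1 = z'.1 := hV.2.1 _ hz.1.1.1 _ hz'.1.1.1 h2
    exact Prod.ext h3 h1
  · rintro ⟨q, o⟩ hb
    obtain ⟨hq0, ho0⟩ := Finset.mem_sigma.1 hb
    have hq : q ∈ A.filter fun p => 0 < p.2 := hq0
    have ho : o ∈ (avail (srcs A) (A.filter fun p => 0 < p.2) q.2).filter (· < q.1) := ho0
    rw [Finset.mem_filter] at hq ho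
    obtain ⟨hqA, hq2⟩ := hq
    obtain ⟨ho1, hlt⟩ := ho
    rw [avail, Finset.mem_filter] at ho1
    obtain ⟨hoO, holt, hoafter⟩ := ho1
    obtain ⟨p, hpA, hp1⟩ := mem_srcs_arc hV hoO
    have c1 := cond1' hV hpA
    have c2 := cond1' hV hqA
    refine ⟨(p, q), ?_, ?_⟩
    · rw [Finset.mem_filter, hY, Finset.mem_filter, Finset.mem_product]
      refine ⟨⟨⟨hpA, hqA⟩, ?_, ?_⟩, show ¬ ((p, q).2.2 < 0) from by show ¬ (q.2 < 0); omega⟩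
      · show nestOrd n p.1 < nestOrd n q.1
        rw [nestOrd_of_pos c1.1, nestOrd_of_pos c2.1, hp1]
        exact hlt
      · show nestOrd n q.2 < nestOrd n p.2
        rw [nestOrd_of_pos hq2]
        rcases lt_trichotomy 0 p.2 with h | h | h
        · rw [nestOrd_of_pos h]
          have h5 := hoafter p (Finset.mem_filter.2 ⟨hpA, h⟩) hp1
          rcases lt_or_eq_of_le h5 with h' | h'
          · exact h'
          · exfalso
            have hqp : q = p := hV.2.2.1 _ hqA _ hpA h'
            rw [hqp, hp1] at hlt
            omega
        · exact absurd h.symm c1.2.2.1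
        · rw [nestOrd_of_neg (by omega)]
          omega
    · show (⟨(p, q).2, (p, q).1.1⟩ : Σ _ : ℤ × ℤ, ℤ) = ⟨q, o⟩
      rw [Sigma.mk.inj_iff]
      exact ⟨rfl, by rw [heq_eq_eq]; exact hp1⟩

/-- for tail pairs the two filters agree -/
lemma tailSet_eq :
    (((A ×ˢ A).filter fun z => CrossRel n z.1 z.2).filter fun z => z.1.2 < 0)
      = (((A ×ˢ A).filter fun z => NestRel n z.1 z.2).filter fun z => z.2.2 < 0) := by
  ext z
  simp only [Finset.mem_filter, Finset.mem_product]
  constructor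
  · rintro ⟨⟨⟨h1, h2⟩, hcr⟩, hs⟩
    have hs2 : z.2.2 < 0 := cross_sign hV h1 h2 hcr hs
    exact ⟨⟨⟨h1, h2⟩, (tail_cross_iff_nest hV h1 h2 hs hs2).1 hcr⟩, hs2⟩
  · rintro ⟨⟨⟨h1, h2⟩, hnr⟩, hs⟩
    have hs1 : z.1.2 < 0 := nest_sign hV h1 h2 hnr hs
    exact ⟨⟨⟨h1, h2⟩, (tail_cross_iff_nest hV h1 h2 hs1 hs).2 hnr⟩, hs1⟩

end

end KZaux
namespace KZaux

variable {n : ℕ}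

def AposS (A : Finset (ℤ × ℤ)) : Finset (ℤ × ℤ) := A.filter fun p => 0 < p.2
def AtailS (A : Finset (ℤ × ℤ)) : Finset (ℤ × ℤ) := A.filter fun p => p.2 < 0
def RoldS (A : Finset (ℤ × ℤ)) : Finset ℤ := srcs A \ srcs (AposS A)
def RnewS (A : Finset (ℤ × ℤ)) : Finset ℤ := srcs A \ srcs (kz (srcs A) (AposS A))
def tmapS (A : Finset (ℤ × ℤ)) (p : ℤ × ℤ) : ℤ × ℤ :=
  (sameMap (RoldS A) (RnewS A) p.1, -(sameMap (RoldS A) (RnewS A) (-p.2)))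

/-- the crossing-nesting involution on valid arc sets -/
def psi (A : Finset (ℤ × ℤ)) : Finset (ℤ × ℤ) :=
  kz (srcs A) (AposS A) ∪ (AtailS A).image (tmapS A)

section
variable {A : Finset (ℤ × ℤ)} (hV : ValidArcs n A)
include hV

lemma srcs_bounds {o : ℤ} (h : o ∈ srcs A) : 0 < o ∧ o ≤ (n : ℤ) := by
  obtain ⟨q, hq, rfl⟩ := mem_srcs_arc hV h
  have := cond1' hV hq
  exact ⟨this.1, this.2.1⟩

lemma tgts_pos_bounds {c : ℤ} (h : c ∈ tgts (AposS A)) : 0 < c ∧ c ≤ (n : ℤ) := by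
  rw [tgts, Finset.mem_image] at h
  obtain ⟨q, hq, rfl⟩ := h
  rw [AposS, Finset.mem_filter] at hq
  have := cond1' hV hq.1
  exact ⟨hq.2, this.2.2.2.2.1⟩

lemma pos_good : Good (srcs A) (AposS A) := by
  refine ⟨?_, ?_, ?_⟩
  · intro p hp
    rw [AposS, Finset.mem_filter] at hp
    exact ⟨Finset.mem_image_of_mem _ hp.1, pos_snd_lt hV hp.1 hp.2⟩
  · intro p hp q hq h
    rw [AposS, Finset.mem_filter] at hp hq
    exact hV.2.1 _ hp.1 _ hq.1 h
  · intro p hp q hq h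
    rw [AposS, Finset.mem_filter] at hp hq
    exact hV.2.2.1 _ hp.1 _ hq.1 h

lemma tail_src_mem {p : ℤ × ℤ} (hp : p ∈ AtailS A) : p.1 ∈ RoldS A := by
  rw [AtailS, Finset.mem_filter] at hp
  rw [RoldS, Finset.mem_sdiff]
  refine ⟨Finset.mem_image_of_mem _ hp.1, ?_⟩
  intro hmem
  rw [srcs, Finset.mem_image] at hmem
  obtain ⟨q, hq, hq1⟩ := hmem
  rw [AposS, Finset.mem_filter] at hq
  have : q = p := hV.2.1 _ hq.1 _ hp.1 hq1
  subst this
  omega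

lemma tail_mirror {p : ℤ × ℤ} (hp : p ∈ AtailS A) : (-p.2, -p.1) ∈ AtailS A := by
  rw [AtailS, Finset.mem_filter] at hp ⊢
  have h := hV.2.2.2.1 _ hp.1 hp.2
  have := (cond1' hV hp.1).1
  exact ⟨h, by simp only; omega⟩

lemma tail_negsnd_mem {p : ℤ × ℤ} (hp : p ∈ AtailS A) : -p.2 ∈ RoldS A :=
  tail_src_mem hV (tail_mirror hV hp)

lemma card_RS : (RoldS A).card = (RnewS A).card := by
  have h1 : srcs (AposS A) ⊆ srcs A := Finset.image_subset_image (Finset.filter_subset _ _)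
  have KM := kz_main (srcs A) (AposS A) (pos_good hV)
  have h2 : srcs (kz (srcs A) (AposS A)) ⊆ srcs A := by
    intro x hx
    rw [srcs, Finset.mem_image] at hx
    obtain ⟨q, hq, rfl⟩ := hx
    exact (KM.1.1 q hq).1
  rw [RoldS, RnewS, Finset.card_sdiff_of_subset h1, Finset.card_sdiff_of_subset h2,
    srcs_card (pos_good hV), srcs_card KM.1, KM.2.2.1]

lemma kz_srcs_sub : srcs (kz (srcs A) (AposS A)) ⊆ srcs A := by
  have KM := kz_main (srcs A) (AposS A) (pos_good hV)
  intro x hx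
  rw [srcs, Finset.mem_image] at hx
  obtain ⟨q, hq, rfl⟩ := hx
  exact (KM.1.1 q hq).1

lemma kz_snd_tgts {p : ℤ × ℤ} (hp : p ∈ kz (srcs A) (AposS A)) :
    p.2 ∈ tgts (AposS A) := by
  have KM := kz_main (srcs A) (AposS A) (pos_good hV)
  rw [← KM.2.1]
  exact Finset.mem_image_of_mem _ hp

lemma tmap_fst_mem {p : ℤ × ℤ} (hp : p ∈ AtailS A) : (tmapS A p).1 ∈ RnewS A :=
  sameMap_mem (card_RS hV) (tail_src_mem hV hp)

lemma tmap_negsnd_mem {p : ℤ × ℤ} (hp : p ∈ AtailS A) :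
    -(tmapS A p).2 ∈ RnewS A := by
  rw [tmapS, neg_neg]
  exact sameMap_mem (card_RS hV) (tail_negsnd_mem hV hp)

lemma RnewS_bounds {u : ℤ} (h : u ∈ RnewS A) : 0 < u ∧ u ≤ (n : ℤ) :=
  srcs_bounds hV (Finset.mem_sdiff.1 h).1

lemma RoldS_bounds {u : ℤ} (h : u ∈ RoldS A) : 0 < u ∧ u ≤ (n : ℤ) :=
  srcs_bounds hV (Finset.mem_sdiff.1 h).1

lemma tmap_inj {p q : ℤ × ℤ} (hp : p ∈ AtailS A) (hq : q ∈ AtailS A)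
    (h : tmapS A p = tmapS A q) : p = q := by
  have h1 := congrArg Prod.fst h
  rw [tmapS, tmapS] at h1
  have : p.1 = q.1 :=
    sameMap_inj (card_RS hV) (tail_src_mem hV hp) (tail_src_mem hV hq) h1
  exact hV.2.1 _ (Finset.mem_of_mem_filter _ hp) _ (Finset.mem_of_mem_filter _ hq) this

lemma psi_pos_part : (psi A).filter (fun p => 0 < p.2) = kz (srcs A) (AposS A) := by
  ext p
  rw [psi, Finset.mem_filter, Finset.mem_union]
  constructor
  · rintro ⟨h1 | h1, h2⟩
    · exact h1
    · exfalso
      rw [Finset.mem_image] at h1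
      obtain ⟨q, hq, rfl⟩ := h1
      have := RnewS_bounds hV (tmap_negsnd_mem hV hq)
      rw [tmapS] at h2
      simp only at h2
      rw [tmapS] at this
      simp only [neg_neg] at this
      omega
  · intro h
    have := tgts_pos_bounds hV (kz_snd_tgts hV h)
    exact ⟨Or.inl h, this.1⟩

lemma psi_tail_part : (psi A).filter (fun p => p.2 < 0) = (AtailS A).image (tmapS A) := by
  ext p
  rw [psi, Finset.mem_filter, Finset.mem_union]
  constructor
  · rintro ⟨h1 | h1, h2⟩
    · exfalso
      have := tgts_pos_bounds hV (kz_snd_tgts hV h1)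
      omega
    · exact h1
  · intro h
    refine ⟨Or.inr h, ?_⟩
    rw [Finset.mem_image] at h
    obtain ⟨q, hq, rfl⟩ := h
    have := RnewS_bounds hV (tmap_negsnd_mem hV hq)
    omega

lemma psi_srcs : srcs (psi A) = srcs A := by
  apply Finset.Subset.antisymm
  · intro x hx
    rw [srcs, Finset.mem_image] at hx
    obtain ⟨q, hq, rfl⟩ := hx
    rw [psi, Finset.mem_union] at hq
    rcases hq with hq | hq
    · exact kz_srcs_sub hV (Finset.mem_image_of_mem _ hq)
    · rw [Finset.mem_image] at hq
      obtain ⟨r, hr, rfl⟩ := hq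
      exact (Finset.mem_sdiff.1 (tmap_fst_mem hV hr)).1
  · intro x hx
    by_cases hmem : x ∈ srcs (kz (srcs A) (AposS A))
    · rw [srcs, Finset.mem_image] at hmem
      obtain ⟨q, hq, rfl⟩ := hmem
      exact Finset.mem_image_of_mem _ (by rw [psi, Finset.mem_union]; exact Or.inl hq)
    · have hxR : x ∈ RnewS A := Finset.mem_sdiff.2 ⟨hx, hmem⟩
      -- x is the image of an element of RoldS A
      set y := sameMap (RnewS A) (RoldS A) x with hy
      have hyR : y ∈ RoldS A := sameMap_mem (card_RS hV).symm hxR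
      have hxy : sameMap (RoldS A) (RnewS A) y = x := by
        rw [hy, sameMap_sameMap (card_RS hV).symm hxR]
      -- y is the source of a tail arc
      have hyt : y ∈ srcs (AtailS A) := by
        obtain ⟨q, hq, hq1⟩ := mem_srcs_arc hV (Finset.mem_sdiff.1 hyR).1
        have hqt : q ∈ AtailS A := by
          rw [AtailS, Finset.mem_filter]
          have hc := cond1' hV hq
          refine ⟨hq, ?_⟩
          rcases lt_trichotomy q.2 0 with h | h | h
          · exact h
          · exact absurd h hc.2.2.1
          · exfalso
            have : q.1 ∈ srcs (AposS A) := Finset.mem_image_of_mem _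
              (by rw [AposS, Finset.mem_filter]; exact ⟨hq, h⟩)
            rw [hq1] at this
            exact (Finset.mem_sdiff.1 hyR).2 this
        rw [← hq1]
        exact Finset.mem_image_of_mem _ hqt
      rw [srcs, Finset.mem_image] at hyt
      obtain ⟨q, hq, hq1⟩ := hyt
      refine Finset.mem_image.2 ⟨tmapS A q, ?_, ?_⟩
      · rw [psi, Finset.mem_union]
        exact Or.inr (Finset.mem_image_of_mem _ hq)
      · rw [tmapS]
        simp only
        rw [hq1, hxy]

lemma psi_valid : ValidArcs n (psi A) := by
  have KM := kz_main (srcs A) (AposS A) (pos_good hV)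
  refine ⟨?_, ?_, ?_, ?_, ?_⟩
  · intro p hp
    rw [psi, Finset.mem_union] at hp
    rcases hp with hp | hp
    · have h1 := srcs_bounds hV ((KM.1.1 p hp).1)
      have h2 := tgts_pos_bounds hV (kz_snd_tgts hV hp)
      refine ⟨h1.1, h1.2, by omega, by rw [abs_le]; omega, ?_⟩
      rw [nestOrd_of_pos h1.1, nestOrd_of_pos h2.1]
      exact (KM.1.1 p hp).2
    · rw [Finset.mem_image] at hp
      obtain ⟨q, hq, rfl⟩ := hp
      have h1 := RnewS_bounds hV (tmap_fst_mem hV hq)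
      have h2 := RnewS_bounds hV (tmap_negsnd_mem hV hq)
      refine ⟨h1.1, h1.2, by omega, by rw [abs_le]; omega, ?_⟩
      rw [nestOrd_of_pos h1.1, nestOrd_of_neg (by omega)]
      omega
  · intro p hp q hq h
    rw [psi, Finset.mem_union] at hp hq
    rcases hp with hp | hp <;> rcases hq with hq | hq
    · exact KM.1.2.1 p hp q hq h
    · exfalso
      rw [Finset.mem_image] at hq
      obtain ⟨r, hr, rfl⟩ := hq
      have h1 : p.1 ∈ srcs (kz (srcs A) (AposS A)) := Finset.mem_image_of_mem _ hp
      have h2 := (Finset.mem_sdiff.1 (tmap_fst_mem hV hr)).2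
      rw [← h] at h2
      exact h2 h1
    · exfalso
      rw [Finset.mem_image] at hp
      obtain ⟨r, hr, rfl⟩ := hp
      have h1 : q.1 ∈ srcs (kz (srcs A) (AposS A)) := Finset.mem_image_of_mem _ hq
      have h2 := (Finset.mem_sdiff.1 (tmap_fst_mem hV hr)).2
      rw [h] at h2
      exact h2 h1
    · rw [Finset.mem_image] at hp hq
      obtain ⟨r, hr, rfl⟩ := hp
      obtain ⟨r', hr', rfl⟩ := hq
      rw [tmapS, tmapS] at h
      simp only at h
      have : r.1 = r'.1 :=
        sameMap_inj (card_RS hV) (tail_src_mem hV hr) (tail_src_mem hV hr') h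
      have : r = r' :=
        hV.2.1 _ (Finset.mem_of_mem_filter _ hr) _ (Finset.mem_of_mem_filter _ hr') this
      rw [this]
  · intro p hp q hq h
    rw [psi, Finset.mem_union] at hp hq
    rcases hp with hp | hp <;> rcases hq with hq | hq
    · exact KM.1.2.2 p hp q hq h
    · exfalso
      rw [Finset.mem_image] at hq
      obtain ⟨r, hr, rfl⟩ := hq
      have h1 := tgts_pos_bounds hV (kz_snd_tgts hV hp)
      have h2 := RnewS_bounds hV (tmap_negsnd_mem hV hr)
      rw [h] at h1
      omega
    · exfalso
      rw [Finset.mem_image] at hp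
      obtain ⟨r, hr, rfl⟩ := hp
      have h1 := tgts_pos_bounds hV (kz_snd_tgts hV hq)
      have h2 := RnewS_bounds hV (tmap_negsnd_mem hV hr)
      rw [← h] at h1
      omega
    · rw [Finset.mem_image] at hp hq
      obtain ⟨r, hr, rfl⟩ := hp
      obtain ⟨r', hr', rfl⟩ := hq
      rw [tmapS, tmapS] at h
      simp only [neg_inj] at h
      have h1 : -r.2 = -r'.2 :=
        sameMap_inj (card_RS hV) (tail_negsnd_mem hV hr) (tail_negsnd_mem hV hr') h
      have : r.2 = r'.2 := by omega
      have : r = r' :=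
        hV.2.2.1 _ (Finset.mem_of_mem_filter _ hr) _ (Finset.mem_of_mem_filter _ hr') this
      rw [this]
  · intro p hp h2
    rw [psi, Finset.mem_union] at hp
    rcases hp with hp | hp
    · exfalso
      have := tgts_pos_bounds hV (kz_snd_tgts hV hp)
      omega
    · rw [Finset.mem_image] at hp
      obtain ⟨r, hr, rfl⟩ := hp
      rw [psi, Finset.mem_union]
      right
      refine Finset.mem_image.2 ⟨(-r.2, -r.1), tail_mirror hV hr, ?_⟩
      rw [tmapS, tmapS]
      simp only [neg_neg]
  · intro p hp q hq h1 h2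
    rw [psi, Finset.mem_union] at hp hq
    have hcent : ∀ r ∈ AtailS A, (tmapS A r).2 = -(tmapS A r).1 → r.2 = -r.1 := by
      intro r hr hc
      rw [tmapS] at hc
      simp only [neg_inj] at hc
      have := sameMap_inj (card_RS hV) (tail_negsnd_mem hV hr) (tail_src_mem hV hr) hc
      omega
    rcases hp with hp | hp
    · exfalso
      have h3 := tgts_pos_bounds hV (kz_snd_tgts hV hp)
      have h4 := srcs_bounds hV ((KM.1.1 p hp).1)
      omega
    · rcases hq with hq | hq
      · exfalso
        have h3 := tgts_pos_bounds hV (kz_snd_tgts hV hq)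
        have h4 := srcs_bounds hV ((KM.1.1 q hq).1)
        omega
      · rw [Finset.mem_image] at hp hq
        obtain ⟨r, hr, rfl⟩ := hp
        obtain ⟨r', hr', rfl⟩ := hq
        have c1 := hcent r hr h1
        have c2 := hcent r' hr' h2
        have : r = r' := hV.2.2.2.2 _ (Finset.mem_of_mem_filter _ hr) _
          (Finset.mem_of_mem_filter _ hr') c1 c2
        rw [this]

end

end KZaux
namespace KZaux

variable {n : ℕ}

lemma tmap_fst (A : Finset (ℤ × ℤ)) (p : ℤ × ℤ) :
    (tmapS A p).1 = sameMap (RoldS A) (RnewS A) p.1 := rfl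

lemma tmap_snd (A : Finset (ℤ × ℤ)) (p : ℤ × ℤ) :
    (tmapS A p).2 = -(sameMap (RoldS A) (RnewS A) (-p.2)) := rfl

section
variable {A : Finset (ℤ × ℤ)} (hV : ValidArcs n A)
include hV

lemma pos_tail_union : AposS A ∪ AtailS A = A := by
  ext p
  rw [Finset.mem_union, AposS, AtailS, Finset.mem_filter, Finset.mem_filter]
  constructor
  · rintro (⟨h, _⟩ | ⟨h, _⟩) <;> exact h
  · intro h
    have := (cond1' hV h).2.2.1
    rcases lt_trichotomy 0 p.2 with h' | h' | h'
    · exact Or.inl ⟨h, h'⟩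
    · exact absurd h'.symm this
    · exact Or.inr ⟨h, h'⟩

lemma psi_Apos : AposS (psi A) = kz (srcs A) (AposS A) := psi_pos_part hV

lemma psi_Atail : AtailS (psi A) = (AtailS A).image (tmapS A) := psi_tail_part hV

lemma psi_Rold : RoldS (psi A) = RnewS A := by
  rw [RoldS, psi_srcs hV, psi_Apos hV, RnewS]

lemma psi_Rnew : RnewS (psi A) = RoldS A := by
  have KM := kz_main (srcs A) (AposS A) (pos_good hV)
  rw [RnewS, psi_srcs hV, psi_Apos hV, KM.2.2.2.1, RoldS]

lemma tmap_tmap {q : ℤ × ℤ} (hq : q ∈ AtailS A) : tmapS (psi A) (tmapS A q) = q := by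
  have hc := card_RS hV
  rw [tmapS, tmapS, psi_Rold hV, psi_Rnew hV]
  simp only [neg_neg]
  rw [sameMap_sameMap hc (tail_src_mem hV hq), sameMap_sameMap hc (tail_negsnd_mem hV hq),
    neg_neg]

lemma psi_psi : psi (psi A) = A := by
  have KM := kz_main (srcs A) (AposS A) (pos_good hV)
  have h1 : kz (srcs (psi A)) (AposS (psi A)) = AposS A := by
    rw [psi_srcs hV, psi_Apos hV, KM.2.2.2.1]
  have h2 : (AtailS (psi A)).image (tmapS (psi A)) = AtailS A := by
    rw [psi_Atail hV, Finset.image_image]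
    have h3 : Finset.image (tmapS (psi A) ∘ tmapS A) (AtailS A) =
        Finset.image id (AtailS A) := Finset.image_congr (fun q hq => tmap_tmap hV hq)
    rw [h3, Finset.image_id]
  rw [psi, h1, h2, pos_tail_union hV]

lemma tail_crossRel_iff {p q : ℤ × ℤ} (hp : p ∈ A) (hq : q ∈ A)
    (h1 : p.2 < 0) (h2 : q.2 < 0) :
    CrossRel n p q ↔ (p.1 < q.1 ∧ q.2 < p.2) := by
  have c1 := cond1' hV hp
  have c2 := cond1' hV hq
  rw [crossRel_iff hV hp hq, crossOrd_of_neg (by omega), crossOrd_of_neg (by omega)]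
  omega

lemma psi_tail_card :
    ((((psi A) ×ˢ (psi A)).filter fun z => CrossRel n z.1 z.2).filter
        fun z => z.1.2 < 0).card
      = (((A ×ˢ A).filter fun z => CrossRel n z.1 z.2).filter fun z => z.1.2 < 0).card := by
  have hVB := psi_valid hV
  symm
  apply Finset.card_bij (fun z _ => (tmapS A z.1, tmapS A z.2))
  · rintro z hz
    rw [Finset.mem_filter, Finset.mem_filter, Finset.mem_product] at hz
    obtain ⟨⟨⟨hz1, hz2⟩, hcr⟩, hs1⟩ := hz
    have hs2 : z.2.2 < 0 := cross_sign hV hz1 hz2 hcr hs1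
    have ht1 : z.1 ∈ AtailS A := Finset.mem_filter.2 ⟨hz1, hs1⟩
    have ht2 : z.2 ∈ AtailS A := Finset.mem_filter.2 ⟨hz2, hs2⟩
    have hm1 : tmapS A z.1 ∈ psi A := by
      rw [psi, Finset.mem_union]; exact Or.inr (Finset.mem_image_of_mem _ ht1)
    have hm2 : tmapS A z.2 ∈ psi A := by
      rw [psi, Finset.mem_union]; exact Or.inr (Finset.mem_image_of_mem _ ht2)
    have hb1 := RnewS_bounds hV (tmap_negsnd_mem hV ht1)
    have hb2 := RnewS_bounds hV (tmap_negsnd_mem hV ht2)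
    rw [tmap_snd, neg_neg] at hb1 hb2
    have hns1 : (tmapS A z.1).2 < 0 := by rw [tmap_snd]; omega
    have hns2 : (tmapS A z.2).2 < 0 := by rw [tmap_snd]; omega
    rw [Finset.mem_filter, Finset.mem_filter, Finset.mem_product]
    refine ⟨⟨⟨hm1, hm2⟩, ?_⟩, hns1⟩
    rw [tail_crossRel_iff hVB hm1 hm2 hns1 hns2]
    have hold := (tail_crossRel_iff hV hz1 hz2 hs1 hs2).1 hcr
    constructor
    · rw [tmap_fst, tmap_fst,
        sameMap_lt_iff (card_RS hV) (tail_src_mem hV ht1) (tail_src_mem hV ht2)]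
      exact hold.1
    · rw [tmap_snd, tmap_snd, neg_lt_neg_iff,
        sameMap_lt_iff (card_RS hV) (tail_negsnd_mem hV ht1) (tail_negsnd_mem hV ht2)]
      omega
  · rintro z hz z' hz' heq
    rw [Finset.mem_filter, Finset.mem_filter, Finset.mem_product] at hz hz'
    obtain ⟨⟨⟨hz1, hz2⟩, hcr⟩, hs1⟩ := hz
    obtain ⟨⟨⟨hz1', hz2'⟩, hcr'⟩, hs1'⟩ := hz'
    have hs2 : z.2.2 < 0 := cross_sign hV hz1 hz2 hcr hs1
    have hs2' : z'.2.2 < 0 := cross_sign hV hz1' hz2' hcr' hs1'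
    have e1 := tmap_inj hV (Finset.mem_filter.2 ⟨hz1, hs1⟩)
      (Finset.mem_filter.2 ⟨hz1', hs1'⟩) (congrArg Prod.fst heq)
    have e2 := tmap_inj hV (Finset.mem_filter.2 ⟨hz2, hs2⟩)
      (Finset.mem_filter.2 ⟨hz2', hs2'⟩) (congrArg Prod.snd heq)
    exact Prod.ext e1 e2
  · rintro w hw
    rw [Finset.mem_filter, Finset.mem_filter, Finset.mem_product] at hw
    obtain ⟨⟨⟨hw1, hw2⟩, hcr⟩, hs1⟩ := hw
    have hs2 : w.2.2 < 0 := cross_sign hVB hw1 hw2 hcr hs1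
    have hwt1 : w.1 ∈ AtailS (psi A) := Finset.mem_filter.2 ⟨hw1, hs1⟩
    have hwt2 : w.2 ∈ AtailS (psi A) := Finset.mem_filter.2 ⟨hw2, hs2⟩
    rw [psi_Atail hV, Finset.mem_image] at hwt1 hwt2
    obtain ⟨r1, hr1, he1⟩ := hwt1
    obtain ⟨r2, hr2, he2⟩ := hwt2
    refine ⟨(r1, r2), ?_, ?_⟩
    · rw [Finset.mem_filter, Finset.mem_filter, Finset.mem_product]
      have hs1' : r1.2 < 0 := (Finset.mem_filter.1 hr1).2
      have hs2' : r2.2 < 0 := (Finset.mem_filter.1 hr2).2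
      have hr1A : r1 ∈ A := Finset.mem_of_mem_filter _ hr1
      have hr2A : r2 ∈ A := Finset.mem_of_mem_filter _ hr2
      refine ⟨⟨⟨hr1A, hr2A⟩, ?_⟩, hs1'⟩
      rw [tail_crossRel_iff hV hr1A hr2A hs1' hs2']
      have hnew := (tail_crossRel_iff hVB hw1 hw2 hs1 hs2).1 hcr
      rw [← he1, ← he2, tmap_fst, tmap_fst, tmap_snd, tmap_snd, neg_lt_neg_iff,
        sameMap_lt_iff (card_RS hV) (tail_src_mem hV hr1) (tail_src_mem hV hr2),
        sameMap_lt_iff (card_RS hV) (tail_negsnd_mem hV hr1)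
          (tail_negsnd_mem hV hr2)] at hnew
      omega
    · show (tmapS A r1, tmapS A r2) = w
      rw [he1, he2]

lemma psi_crStat :
    (((psi A) ×ˢ (psi A)).filter fun z => CrossRel n z.1 z.2).card
      = ((A ×ˢ A).filter fun z => NestRel n z.1 z.2).card := by
  have hVB := psi_valid hV
  have KM := kz_main (srcs A) (AposS A) (pos_good hV)
  rw [crStat_decomp hVB, neStat_decomp hV, psi_tail_card hV]
  rw [psi_srcs hV]
  rw [show (psi A).filter (fun p => 0 < p.2) = kz (srcs A) (AposS A) from psi_pos_part hV]
  rw [KM.2.2.2.2.1]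
  congr 1
  rw [← tailSet_eq hV]

lemma psi_neStat :
    (((psi A) ×ˢ (psi A)).filter fun z => NestRel n z.1 z.2).card
      = ((A ×ˢ A).filter fun z => CrossRel n z.1 z.2).card := by
  have hVB := psi_valid hV
  have KM := kz_main (srcs A) (AposS A) (pos_good hV)
  rw [neStat_decomp hVB, crStat_decomp hV]
  rw [psi_srcs hV]
  rw [show (psi A).filter (fun p => 0 < p.2) = kz (srcs A) (AposS A) from psi_pos_part hV]
  rw [KM.2.2.2.2.2]
  congr 1
  rw [← tailSet_eq hVB, psi_tail_card hV]

end

end KZaux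
namespace KZaux

lemma fromArcs_blocks {n : ℕ} (A : Finset (ℤ × ℤ)) (h : ValidArcs n A) :
    (fromArcs A h).blocks = blocksOf n A := rfl

end KZaux

theorem stmt5 (n : ℕ) (hn : 0 < n) :
    ∃ Φ : SetPartitionC n → SetPartitionC n, Function.Bijective Φ ∧
      ∀ P : SetPartitionC n,
        (Φ P).openers = P.openers ∧ (Φ P).closers = P.closers ∧
        (Φ P).crossingsPos = P.nestingsPos ∧ (Φ P).nestingsPos = P.crossingsPos := by
  refine ⟨fun P => KZaux.fromArcs (KZaux.psi (KZaux.toArcs P))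
    (KZaux.psi_valid (KZaux.toArcs_valid P)), ?_, ?_⟩
  · apply Function.Involutive.bijective
    intro P
    apply KZaux.partC_ext
    rw [KZaux.fromArcs_blocks]
    have harc : KZaux.toArcs (KZaux.fromArcs (KZaux.psi (KZaux.toArcs P))
        (KZaux.psi_valid (KZaux.toArcs_valid P))) = KZaux.psi (KZaux.toArcs P) :=
      KZaux.toArcs_fromArcs _
    rw [harc, KZaux.psi_psi (KZaux.toArcs_valid P), KZaux.blocksOf_toArcs]
  · intro P
    have hV := KZaux.toArcs_valid P
    have harc : KZaux.toArcs (KZaux.fromArcs (KZaux.psi (KZaux.toArcs P))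
        (KZaux.psi_valid hV)) = KZaux.psi (KZaux.toArcs P) :=
      KZaux.toArcs_fromArcs _
    have KM := KZaux.kz_main (KZaux.srcs (KZaux.toArcs P)) (KZaux.AposS (KZaux.toArcs P))
      (KZaux.pos_good hV)
    refine ⟨?_, ?_, ?_, ?_⟩
    · rw [KZaux.openers_eq, KZaux.openers_eq, harc, KZaux.psi_srcs hV]
    · rw [KZaux.closers_eq, KZaux.closers_eq, harc]
      show KZaux.tgts (KZaux.AposS (KZaux.psi (KZaux.toArcs P)))
        = KZaux.tgts (KZaux.AposS (KZaux.toArcs P))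
      rw [KZaux.psi_Apos hV, KM.2.1]
    · show ((KZaux.toArcs _ ×ˢ KZaux.toArcs _).filter
          fun z => CrossRel n z.1 z.2).card = _
      rw [harc, KZaux.psi_crStat hV]
      rfl
    · show ((KZaux.toArcs _ ×ˢ KZaux.toArcs _).filter
          fun z => NestRel n z.1 z.2).card = _
      rw [harc, KZaux.psi_neStat hV]
      rfl
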